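/- arXiv:1801.00517 — 4 statements merged into one kernel-verified Lean document; each statement's English description precedes it below -/
import Mathlib

section
/- For coprime positive integers a and b, S(a,b) + S(b,a) = a/b + b/a + 1/(ab) - 3, where S(a,b) = 12·s(a,b) is the normalized Dedekind sum. -/
/-- The sawtooth function on rationals. -/
def saw (x : ℚ) : ℚ := if x.den = 1 then 0 else Int.fract x - 1/2

/-- The normalized Dedekind sum `S(a,b) = 12 s(a,b)`. -/
def S (a b : ℤ) : ℚ :=
  12 * ∑ k ∈ Finset.Icc 1 b.toNat, saw ((k : ℚ) / (b : ℚ)) * saw (((a : ℚ) * k) / (b : ℚ))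

open Finset

section helpers

lemma Icc_insert (m : ℤ) (h : 0 ≤ m) :
    Finset.Icc (1:ℤ) (m+1) = insert (m+1) (Finset.Icc 1 m) := by
  ext x; simp only [Finset.mem_Icc, Finset.mem_insert]; omega

lemma not_mem_Icc (m : ℤ) : (m+1) ∉ Finset.Icc (1:ℤ) m := by
  simp only [Finset.mem_Icc]; omega

lemma Icc_one_zero : Finset.Icc (1:ℤ) 0 = ∅ := Finset.Icc_eq_empty (by norm_num)

lemma gauss1 (m : ℤ) (hm : 0 ≤ m) : 2 * ∑ k ∈ Icc (1:ℤ) m, k = m * (m+1) := by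
  refine Int.le_induction (motive := fun m _ => 2 * ∑ k ∈ Icc (1:ℤ) m, k = m * (m+1))
    (by show _ = _; rw [Icc_one_zero]; simp) ?_ m hm
  intro n hn ih
  rw [Icc_insert n hn, Finset.sum_insert (not_mem_Icc n), mul_add, ih]; ring

lemma gauss2 (m : ℤ) (hm : 0 ≤ m) : 6 * ∑ k ∈ Icc (1:ℤ) m, k^2 = m * (m+1) * (2*m+1) := by
  refine Int.le_induction (motive := fun m _ => 6 * ∑ k ∈ Icc (1:ℤ) m, k^2 = m * (m+1) * (2*m+1))
    (by show _ = _; rw [Icc_one_zero]; simp) ?_ m hm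
  intro n hn ih
  rw [Icc_insert n hn, Finset.sum_insert (not_mem_Icc n), mul_add, ih]; ring

lemma odd_sum (m : ℤ) (hm : 0 ≤ m) : ∑ j ∈ Icc (1:ℤ) m, (2*j-1) = m^2 := by
  refine Int.le_induction (motive := fun m _ => ∑ j ∈ Icc (1:ℤ) m, (2*j-1) = m^2)
    (by show _ = _; rw [Icc_one_zero]; simp) ?_ m hm
  intro n hn ih
  rw [Icc_insert n hn, Finset.sum_insert (not_mem_Icc n), ih]; ring

lemma mem_perm {a b : ℤ} (hb : 0 < b) (hab : IsCoprime b a) {k : ℤ}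
    (hk : k ∈ Icc (1:ℤ) (b-1)) : a * k % b ∈ Icc (1:ℤ) (b-1) := by
  rw [Finset.mem_Icc] at *
  have h0 : 0 ≤ a * k % b := Int.emod_nonneg _ hb.ne'
  have h1 : a * k % b < b := Int.emod_lt_of_pos _ hb
  have hne : a * k % b ≠ 0 := by
    intro h
    have hd : b ∣ a * k := Int.dvd_of_emod_eq_zero h
    have hd2 : b ∣ k := hab.dvd_of_dvd_mul_left hd
    have := Int.le_of_dvd (by omega) hd2
    omega
  omega

lemma perm {a b : ℤ} (hb : 0 < b) (hab : IsCoprime a b) (f : ℤ → ℤ) :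
    ∑ k ∈ Icc (1:ℤ) (b-1), f (a * k % b) = ∑ k ∈ Icc (1:ℤ) (b-1), f k := by
  have hba : IsCoprime b a := hab.symm
  obtain ⟨u, v, huv⟩ := hab
  have hbu : IsCoprime b u := ⟨v, a, by linarith [huv]⟩
  refine Finset.sum_nbij' (fun k => a * k % b) (fun k => u * k % b)
    (fun k hk => mem_perm hb hba hk) (fun k hk => mem_perm hb hbu hk) ?_ ?_ ?_
  · intro k hk
    rw [Finset.mem_Icc] at hk
    show u * (a * k % b) % b = k
    have h1 : u * (a * k % b) % b = u * (a * k) % b := by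
      rw [Int.mul_emod u (a * k % b) b, Int.emod_emod_of_dvd _ dvd_rfl, ← Int.mul_emod]
    have h2 : u * (a * k) = k + b * (-(v * k)) := by
      have huva : u * a = 1 - v * b := by linarith
      rw [← mul_assoc, huva]; ring
    rw [h1, h2, Int.add_mul_emod_self_left, Int.emod_eq_of_lt (by omega) (by omega)]
  · intro k hk
    rw [Finset.mem_Icc] at hk
    show a * (u * k % b) % b = k
    have h1 : a * (u * k % b) % b = a * (u * k) % b := by
      rw [Int.mul_emod a (u * k % b) b, Int.emod_emod_of_dvd _ dvd_rfl, ← Int.mul_emod]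
    have h2 : a * (u * k) = k + b * (-(v * k)) := by
      have huva : a * u = 1 - v * b := by linarith
      rw [← mul_assoc, huva]; ring
    rw [h1, h2, Int.add_mul_emod_self_left, Int.emod_eq_of_lt (by omega) (by omega)]
  · intro k _; rfl

lemma Csum {a b : ℤ} (ha : 0 < a) (hb : 0 < b) (hab : IsCoprime a b) :
    ∑ k ∈ Icc (1:ℤ) (b-1), (a * k / b)^2
      = ∑ j ∈ Icc (1:ℤ) (a-1), (2*j-1) * ((b-1) - b * j / a) := by
  have step1 : ∀ k ∈ Icc (1:ℤ) (b-1),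
      (a * k / b)^2 = ∑ j ∈ Icc (1:ℤ) (a-1), (if b * j ≤ a * k then 2*j-1 else 0) := by
    intro k hk
    rw [Finset.mem_Icc] at hk
    have hq0 : 0 ≤ a * k / b := Int.ediv_nonneg (mul_nonneg ha.le (by omega)) hb.le
    have hqa : a * k / b ≤ a - 1 := by
      have : a * k / b < a := (Int.ediv_lt_iff_lt_mul hb).2 (by nlinarith)
      omega
    rw [← Finset.sum_filter]
    have hfilter : Finset.filter (fun j => b * j ≤ a * k) (Icc (1:ℤ) (a-1))
        = Icc (1:ℤ) (a * k / b) := by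
      ext j
      simp only [Finset.mem_filter, Finset.mem_Icc]
      constructor
      · rintro ⟨⟨h1, h2⟩, h3⟩
        exact ⟨h1, (Int.le_ediv_iff_mul_le hb).2 (by linarith [h3])⟩
      · rintro ⟨h1, h2⟩
        have := (Int.le_ediv_iff_mul_le hb).1 h2
        exact ⟨⟨h1, by omega⟩, by linarith [this]⟩
    rw [hfilter, odd_sum _ hq0]
  rw [Finset.sum_congr rfl step1, Finset.sum_comm]
  refine Finset.sum_congr rfl (fun j hj => ?_)
  rw [Finset.mem_Icc] at hj
  have hnd : ¬ (a ∣ b * j) := by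
    intro hd
    have : a ∣ j := hab.dvd_of_dvd_mul_left hd
    have := Int.le_of_dvd (by omega) this
    omega
  have hq0 : 0 ≤ b * j / a := Int.ediv_nonneg (mul_nonneg hb.le (by omega)) ha.le
  have hqb : b * j / a ≤ b - 1 := by
    have : b * j / a < b := (Int.ediv_lt_iff_lt_mul ha).2 (by nlinarith)
    omega
  have hfilter : Finset.filter (fun k => b * j ≤ a * k) (Icc (1:ℤ) (b-1))
      = Icc (b * j / a + 1) (b-1) := by
    ext k
    simp only [Finset.mem_filter, Finset.mem_Icc]
    constructor
    · rintro ⟨⟨h1, h2⟩, h3⟩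
      have hlt : b * j < a * k := lt_of_le_of_ne h3 (fun he => hnd ⟨k, he.symm ▸ rfl⟩)
      have : b * j / a < k := (Int.ediv_lt_iff_lt_mul ha).2 (by linarith)
      exact ⟨by omega, h2⟩
    · rintro ⟨h1, h2⟩
      have : b * j / a < k := by omega
      have := (Int.ediv_lt_iff_lt_mul ha).1 this
      exact ⟨⟨by omega, h2⟩, by linarith⟩
  rw [← Finset.sum_filter, hfilter, Finset.sum_const, Int.card_Icc]
  have : (b - 1 + 1 - (b * j / a + 1)).toNat = (b - 1 - b * j / a) := by omega
  rw [nsmul_eq_mul, this]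
  ring

/-- The key integer sum `T`. -/
noncomputable def T (a b : ℤ) : ℤ := ∑ k ∈ Icc (1:ℤ) (b-1), (2*k - b) * (2*(a*k % b) - b)

lemma saw_int (z : ℤ) : saw (z:ℚ) = 0 := by
  rw [saw, if_pos (Rat.den_intCast z)]

lemma saw_frac {b c : ℤ} (hb : 0 < b) (h : ¬ b ∣ c) :
    saw ((c:ℚ)/b) = ((c % b : ℤ):ℚ)/b - 1/2 := by
  have hb0 : (b:ℚ) ≠ 0 := by exact_mod_cast hb.ne'
  have hden : ((c:ℚ)/b).den ≠ 1 := by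
    intro h1
    have h2 : (((((c:ℚ)/b).num : ℤ)):ℚ) = (c:ℚ)/b := (Rat.den_eq_one_iff _).1 h1
    apply h
    refine ⟨((c:ℚ)/b).num, ?_⟩
    have : (c:ℚ) = b * (((c:ℚ)/b).num : ℚ) := by
      rw [h2]; field_simp
    exact_mod_cast this
  rw [saw, if_neg hden]
  have hsplit : (c:ℚ)/b = ((c / b : ℤ) : ℚ) + ((c % b : ℤ):ℚ)/b := by
    have h3 : (c:ℚ) = b * ((c / b : ℤ) : ℚ) + ((c % b : ℤ):ℚ) := by
      exact_mod_cast congrArg (Int.cast : ℤ → ℚ) (Int.mul_ediv_add_emod c b).symm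
    rw [h3]; field_simp
  rw [hsplit, Int.fract_intCast_add, Int.fract_eq_self.2 ⟨?_, ?_⟩]
  · have h0 : (0:ℤ) ≤ c % b := Int.emod_nonneg _ hb.ne'
    have hbq : (0:ℚ) < b := by exact_mod_cast hb
    positivity
  · have h1 : c % b < b := Int.emod_lt_of_pos _ hb
    rw [div_lt_one (by exact_mod_cast hb)]
    exact_mod_cast h1

lemma sum_cast (a b : ℤ) (hb : 0 < b) :
    ∑ k ∈ Finset.Icc 1 b.toNat, saw ((k : ℚ) / (b : ℚ)) * saw (((a : ℚ) * k) / (b : ℚ))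
    = ∑ k ∈ Finset.Icc (1:ℤ) b, saw ((k : ℚ) / (b : ℚ)) * saw (((a : ℚ) * k) / (b : ℚ)) := by
  refine Finset.sum_nbij' (fun k => (k:ℤ)) (fun k => k.toNat) ?_ ?_ ?_ ?_ ?_
  · intro k hk; simp only [Finset.mem_Icc] at *; omega
  · intro k hk; simp only [Finset.mem_Icc] at *; omega
  · intro k hk; simp
  · intro k hk; rw [Finset.mem_Icc] at hk; simp; omega
  · intro k hk; push_cast; ring_nf

lemma S_eq {a b : ℤ} (ha : 0 < a) (hb : 0 < b) (hab : IsCoprime a b) :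
    S a b = 3 * (T a b : ℚ) / (b:ℚ)^2 := by
  have hb0 : (b:ℚ) ≠ 0 := by exact_mod_cast hb.ne'
  have hba : IsCoprime b a := hab.symm
  rw [S, sum_cast a b hb]
  have hbsplit : Finset.Icc (1:ℤ) b = insert b (Finset.Icc 1 (b-1)) := by
    have := Icc_insert (b-1) (by omega)
    simpa using this
  rw [hbsplit, Finset.sum_insert (by simpa using not_mem_Icc (b-1))]
  have hb_term : saw ((b:ℚ)/b) * saw ((a:ℚ)*b/b) = 0 := by
    rw [div_self hb0, mul_div_assoc, div_self hb0, mul_one]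
    have h1 : ((1:ℤ):ℚ) = (1:ℚ) := by norm_num
    rw [← h1, saw_int, zero_mul]
  rw [hb_term, zero_add, T]
  push_cast
  rw [Finset.mul_sum, Finset.mul_sum, Finset.sum_div]
  refine Finset.sum_congr rfl (fun k hk => ?_)
  rw [Finset.mem_Icc] at hk
  have hndk : ¬ b ∣ k := by
    intro hd; have := Int.le_of_dvd (by omega) hd; omega
  have hndak : ¬ b ∣ a * k := by
    intro hd
    have : b ∣ k := hba.dvd_of_dvd_mul_left hd
    exact hndk this
  have h1 : saw ((k:ℚ)/b) = (k:ℚ)/b - 1/2 := by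
    rw [saw_frac hb hndk, Int.emod_eq_of_lt (by omega) (by omega)]
  have h2 : saw ((a:ℚ)*k/b) = ((a*k % b : ℤ):ℚ)/b - 1/2 := by
    have : (a:ℚ)*(k:ℚ) = ((a*k : ℤ):ℚ) := by push_cast; ring
    rw [this, saw_frac hb hndak]
  rw [h1, h2]
  field_simp
  ring

lemma core {a b : ℤ} (ha : 0 < a) (hb : 0 < b) (hab : IsCoprime a b) :
    3*a^2 * T a b + 3*b^2 * T b a = a^3*b + a*b^3 + a*b - 3*a^2*b^2 := by
  have hba : IsCoprime b a := hab.symm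
  -- abbreviations
  set Qb := ∑ k ∈ Icc (1:ℤ) (b-1), k^2 with hQbdef
  set Q1b := ∑ k ∈ Icc (1:ℤ) (b-1), k with hQ1bdef
  set Ab := ∑ k ∈ Icc (1:ℤ) (b-1), k * (a*k/b) with hAbdef
  set Db := ∑ k ∈ Icc (1:ℤ) (b-1), (a*k/b) with hDbdef
  set Cb := ∑ k ∈ Icc (1:ℤ) (b-1), (a*k/b)^2 with hCbdef
  set Qa := ∑ k ∈ Icc (1:ℤ) (a-1), k^2 with hQadef
  set Q1a := ∑ k ∈ Icc (1:ℤ) (a-1), k with hQ1adef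
  set Aa := ∑ k ∈ Icc (1:ℤ) (a-1), k * (b*k/a) with hAadef
  set Da := ∑ k ∈ Icc (1:ℤ) (a-1), (b*k/a) with hDadef
  -- expansions of emod sums
  have expand2 : ∑ k ∈ Icc (1:ℤ) (b-1), (a*k % b)^2 = a^2*Qb - 2*a*b*Ab + b^2*Cb := by
    have h : ∀ k ∈ Icc (1:ℤ) (b-1),
        (a*k % b)^2 = a^2*k^2 - (2*a*b)*(k*(a*k/b)) + b^2*(a*k/b)^2 := by
      intro k _; rw [Int.emod_def]; ring
    rw [Finset.sum_congr rfl h, Finset.sum_add_distrib, Finset.sum_sub_distrib,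
      ← Finset.mul_sum, ← Finset.mul_sum, ← Finset.mul_sum]
  have expand1 : ∑ k ∈ Icc (1:ℤ) (b-1), (a*k % b) = a*Q1b - b*Db := by
    have h : ∀ k ∈ Icc (1:ℤ) (b-1), (a*k % b) = a*k - b*(a*k/b) := by
      intro k _; rw [Int.emod_def]
    rw [Finset.sum_congr rfl h, Finset.sum_sub_distrib, ← Finset.mul_sum, ← Finset.mul_sum]
  have expand1' : ∑ k ∈ Icc (1:ℤ) (a-1), (b*k % a) = b*Q1a - a*Da := by
    have h : ∀ k ∈ Icc (1:ℤ) (a-1), (b*k % a) = b*k - a*(b*k/a) := by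
      intro k _; rw [Int.emod_def]
    rw [Finset.sum_congr rfl h, Finset.sum_sub_distrib, ← Finset.mul_sum, ← Finset.mul_sum]
  -- permutation identities
  have e1 : Qb = a^2*Qb - 2*a*b*Ab + b^2*Cb := by
    rw [← expand2]
    exact (perm hb hab (fun x => x^2)).symm
  have e2 : a*Q1b - b*Db = Q1b := by
    rw [← expand1]
    exact perm hb hab (fun x => x)
  have e2' : b*Q1a - a*Da = Q1a := by
    rw [← expand1']
    exact perm ha hba (fun x => x)
  -- the counting identity
  have e3 : Cb = (b-1)*(a-1)^2 - 2*Aa + Da := by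
    rw [hCbdef, Csum ha hb hab]
    have h : ∀ j ∈ Icc (1:ℤ) (a-1),
        (2*j-1) * ((b-1) - b*j/a) = (b-1)*(2*j-1) - 2*(j*(b*j/a)) + (b*j/a) := by
      intro j _; ring
    rw [Finset.sum_congr rfl h, Finset.sum_add_distrib, Finset.sum_sub_distrib,
      ← Finset.mul_sum, ← Finset.mul_sum, odd_sum (a-1) (by omega)]
  -- T expansions
  have eT : T a b = 4*a*Qb - 4*b*Ab - 2*b*Q1b - 2*a*b*Q1b + 2*b^2*Db + b^2*(b-1) := by
    rw [T]
    have h : ∀ k ∈ Icc (1:ℤ) (b-1),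
        (2*k - b) * (2*(a*k % b) - b)
          = (4*a)*k^2 - (4*b)*(k*(a*k/b)) - ((2*b)*k + (2*a*b)*k) + ((2*b^2)*(a*k/b) + b^2) := by
      intro k _; rw [Int.emod_def]; ring
    rw [Finset.sum_congr rfl h, Finset.sum_add_distrib, Finset.sum_sub_distrib,
      Finset.sum_sub_distrib, Finset.sum_add_distrib, Finset.sum_add_distrib,
      ← Finset.mul_sum, ← Finset.mul_sum, ← Finset.mul_sum, ← Finset.mul_sum, ← Finset.mul_sum,
      Finset.sum_const, Int.card_Icc, nsmul_eq_mul]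
    have hcard : ((b - 1 + 1 - 1).toNat : ℤ) = b - 1 := by omega
    rw [hcard]
    ring
  have eT' : T b a = 4*b*Qa - 4*a*Aa - 2*a*Q1a - 2*a*b*Q1a + 2*a^2*Da + a^2*(a-1) := by
    rw [T]
    have h : ∀ k ∈ Icc (1:ℤ) (a-1),
        (2*k - a) * (2*(b*k % a) - a)
          = (4*b)*k^2 - (4*a)*(k*(b*k/a)) - ((2*a)*k + (2*a*b)*k) + ((2*a^2)*(b*k/a) + a^2) := by
      intro k _; rw [Int.emod_def]; ring
    rw [Finset.sum_congr rfl h, Finset.sum_add_distrib, Finset.sum_sub_distrib,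
      Finset.sum_sub_distrib, Finset.sum_add_distrib, Finset.sum_add_distrib,
      ← Finset.mul_sum, ← Finset.mul_sum, ← Finset.mul_sum, ← Finset.mul_sum, ← Finset.mul_sum,
      Finset.sum_const, Int.card_Icc, nsmul_eq_mul]
    have hcard : ((a - 1 + 1 - 1).toNat : ℤ) = a - 1 := by omega
    rw [hcard]
    ring
  -- Gauss sums
  have hQ : 6*Qb = (b-1)*b*(2*b-1) := by
    have := gauss2 (b-1) (by omega)
    linear_combination this
  have hQ' : 6*Qa = (a-1)*a*(2*a-1) := by
    have := gauss2 (a-1) (by omega)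
    linear_combination this
  have hQ1 : 2*Q1b = (b-1)*b := by
    have := gauss1 (b-1) (by omega)
    linear_combination this
  have hQ1' : 2*Q1a = (a-1)*a := by
    have := gauss1 (a-1) (by omega)
    linear_combination this
  -- D values
  have hD : 2*Db = (a-1)*(b-1) := by
    have hmul : b*(2*Db) = b*((a-1)*(b-1)) := by
      linear_combination (-2)*e2 + (a-1)*hQ1
    exact mul_left_cancel₀ hb.ne' hmul
  have hD' : 2*Da = (a-1)*(b-1) := by
    have hmul : a*(2*Da) = a*((a-1)*(b-1)) := by
      linear_combination (-2)*e2' + (b-1)*hQ1'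
    exact mul_left_cancel₀ ha.ne' hmul
  linear_combination (3*a^2)*eT + (3*b^2)*eT' + (-6*a)*e1 + (-6*a*b^2)*e3
    + (3*a^2*b^2)*hD + (3*a*b^2*(a-1))*hD' + (a*(a^2+1))*hQ + (2*b^3)*hQ'
    + (-3*a^2*b*(1+a))*hQ1 + (-3*a*b^2*(1+b))*hQ1'

end helpers

theorem stmt0 (a b : ℤ) (ha : 0 < a) (hb : 0 < b) (hab : IsCoprime a b) :
    S a b + S b a = (a : ℚ) / b + (b : ℚ) / a + 1 / ((a : ℚ) * b) - 3 := by
  have ha0 : (a:ℚ) ≠ 0 := by exact_mod_cast ha.ne'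
  have hb0 : (b:ℚ) ≠ 0 := by exact_mod_cast hb.ne'
  rw [S_eq ha hb hab, S_eq hb ha hab.symm]
  have hcore : ((3*a^2 * T a b + 3*b^2 * T b a : ℤ) : ℚ)
      = ((a^3*b + a*b^3 + a*b - 3*a^2*b^2 : ℤ) : ℚ) := by
    exact_mod_cast congrArg (Int.cast : ℤ → ℚ) (core ha hb hab)
  push_cast at hcore
  field_simp
  linear_combination hcore
end

section
/- For coprime integers a and b with b > 0, the quantity b·S(a,b) is an integer, where S(a,b) denotes the normalized Dedekind sum. -/
lemma sum_Icc_id (m : ℕ) : 2 * ∑ k ∈ Finset.Icc 1 m, (k : ℤ) = m * (m + 1) := by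
  induction m with
  | zero => simp
  | succ n ih =>
    rw [Finset.sum_Icc_succ_top (by omega)]
    push_cast
    push_cast at ih
    linarith

lemma sum_Icc_sq (m : ℕ) : 6 * ∑ k ∈ Finset.Icc 1 m, (k : ℤ)^2 = m * (m + 1) * (2*m + 1) := by
  induction m with
  | zero => simp
  | succ n ih =>
    rw [Finset.sum_Icc_succ_top (by omega)]
    push_cast
    push_cast at ih
    linarith

lemma saw_int_div (x b : ℤ) (hb : 0 < b) (hx : ¬ b ∣ x) :
    saw ((x : ℚ) / (b : ℚ)) = ((x % b : ℤ) : ℚ) / (b : ℚ) - 1/2 := by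
  have hb' : (b : ℤ) ≠ 0 := hb.ne'
  rw [saw, if_neg, ]
  · have hbn : ((b.toNat : ℕ) : ℚ) = (b : ℚ) := by
      rw [← Int.cast_natCast, Int.toNat_of_nonneg hb.le]
    rw [← hbn, Int.fract_div_intCast_eq_div_intCast_mod]
    norm_cast
    rw [Int.toNat_of_nonneg hb.le]
  · rw [Rat.den_div_intCast_eq_one_iff _ _ hb']
    exact hx

theorem stmt1 (a b : ℤ) (hb : 0 < b) (hab : IsCoprime a b) :
    ∃ n : ℤ, (b : ℚ) * S a b = (n : ℚ) := by
  obtain ⟨m, hm⟩ : ∃ m : ℕ, b.toNat = m + 1 := ⟨b.toNat - 1, by omega⟩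
  have hbm : ((m : ℤ) + 1) = b := by omega
  refine ⟨2*a*m*(2*(m+1)-1) - 3*a*(m+1)*m
      + ∑ k ∈ Finset.Icc 1 m, (6*((m:ℤ)+1) - 12*(k:ℤ)) * ((a*k)/((m:ℤ)+1)), ?_⟩
  subst hbm
  set b : ℤ := (m : ℤ) + 1 with hbdef
  have hb0 : (b : ℚ) ≠ 0 := by positivity
  -- split off the top term
  rw [S, hm, Finset.sum_Icc_succ_top (by omega)]
  have htop : saw (((m + 1 : ℕ) : ℚ) / (b : ℚ)) = 0 := by
    have : ((m + 1 : ℕ) : ℚ) / (b : ℚ) = 1 := by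
      rw [div_eq_one_iff_eq hb0]; push_cast [hbdef]; ring
    rw [this, saw]; norm_num
  rw [htop, zero_mul, add_zero]
  -- rewrite each term
  have hterm : ∀ k ∈ Finset.Icc 1 m,
      saw ((k : ℚ) / (b : ℚ)) * saw (((a : ℚ) * k) / (b : ℚ))
      = ((k : ℚ)/(b:ℚ) - 1/2) * ((((a*(k:ℤ) - b*((a*k)/b)) : ℤ) : ℚ)/(b:ℚ) - 1/2) := by
    intro k hk
    simp only [Finset.mem_Icc] at hk
    have hk1 : (1:ℤ) ≤ (k:ℤ) := by exact_mod_cast hk.1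
    have hk2 : (k:ℤ) < b := by
      have := hk.2; omega
    have hndvd : ¬ b ∣ (k : ℤ) := by
      intro h
      have := Int.le_of_dvd (by omega) h
      omega
    have hndvd2 : ¬ b ∣ a * (k : ℤ) := fun h => hndvd (hab.symm.dvd_of_dvd_mul_left h)
    rw [show ((k : ℚ)) = (((k : ℤ) : ℚ)) by push_cast; ring,
      saw_int_div _ _ hb hndvd, show ((a : ℚ) * ((k:ℤ):ℚ)) = (((a * k : ℤ)) : ℚ) by push_cast; ring,
      saw_int_div _ _ hb hndvd2]
    rw [Int.emod_eq_of_lt (by omega) hk2, Int.emod_def]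
  rw [Finset.sum_congr rfl hterm]
  -- now algebra
  have e1 := sum_Icc_id m
  have e2 := sum_Icc_sq m
  have e1q : 2 * ∑ k ∈ Finset.Icc 1 m, ((k:ℕ) : ℚ) = m * (m + 1) := by
    have := congrArg (fun z : ℤ => (z : ℚ)) e1; push_cast at this; exact this
  have e2q : 6 * ∑ k ∈ Finset.Icc 1 m, ((k:ℕ) : ℚ)^2 = m * (m + 1) * (2*m + 1) := by
    have := congrArg (fun z : ℤ => (z : ℚ)) e2; push_cast at this; exact this
  -- expand termwise
  have hexp : ∀ k ∈ Finset.Icc 1 m,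
      ((k : ℚ)/(b:ℚ) - 1/2) * ((((a*(k:ℤ) - b*((a*k)/b)) : ℤ) : ℚ)/(b:ℚ) - 1/2)
      = (a:ℚ)*(k:ℚ)^2/(b:ℚ)^2 - ((a:ℚ)+1)*(k:ℚ)/(2*(b:ℚ)) + 1/4
        + ((b:ℚ)/2 - (k:ℚ)) * (((a*(k:ℤ)/b : ℤ) : ℚ)/(b:ℚ)) := by
    intro k hk
    push_cast
    field_simp
    ring
  rw [Finset.sum_congr rfl hexp]
  simp only [Finset.sum_add_distrib, Finset.sum_sub_distrib, Finset.sum_div, ← Finset.mul_sum,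
    Finset.sum_const, Nat.card_Icc, nsmul_eq_mul]
  push_cast
  have s2 : ∑ x ∈ Finset.Icc 1 m, (a:ℚ)*(x:ℚ)^2/(b:ℚ)^2
      = ((a:ℚ)/(b:ℚ)^2) * ∑ x ∈ Finset.Icc 1 m, (x:ℚ)^2 := by
    rw [Finset.mul_sum]; exact Finset.sum_congr rfl fun x _ => by ring
  have s1 : ∑ x ∈ Finset.Icc 1 m, ((a:ℚ)+1)*(x:ℚ)/(2*(b:ℚ))
      = (((a:ℚ)+1)/(2*(b:ℚ))) * ∑ x ∈ Finset.Icc 1 m, (x:ℚ) := by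
    rw [Finset.mul_sum]; exact Finset.sum_congr rfl fun x _ => by ring
  have s3 : ∑ x ∈ Finset.Icc 1 m, ((b:ℚ)/2 - (x:ℚ)) * (((a*(x:ℤ)/b : ℤ):ℚ)/(b:ℚ))
      = (1/(12*(b:ℚ))) * ∑ x ∈ Finset.Icc 1 m, (6*(b:ℚ) - 12*(x:ℚ)) * ((a*(x:ℤ)/b : ℤ):ℚ) := by
    rw [Finset.mul_sum]
    exact Finset.sum_congr rfl fun x _ => by field_simp; ring
  rw [s2, s1, s3]
  have hv1 : ∑ x ∈ Finset.Icc 1 m, (x:ℚ) = (m:ℚ)*((m:ℚ)+1)/2 := by linarith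
  have hv2 : ∑ x ∈ Finset.Icc 1 m, (x:ℚ)^2 = (m:ℚ)*((m:ℚ)+1)*(2*(m:ℚ)+1)/6 := by linarith
  rw [hv1, hv2]
  have hbq : (b:ℚ) = (m:ℚ) + 1 := by push_cast [hbdef]; ring
  rw [hbq] at hb0 ⊢
  generalize (∑ x ∈ Finset.Icc 1 m, (6*((m:ℚ)+1) - 12*(x:ℚ)) * ((a*(x:ℤ)/b : ℤ):ℚ)) = SQ
  field_simp
  ring
end

section
/- Let q ≥ 2 and t be positive integers with gcd(t,q) = 1, let a be an integer with gcd(a,q) = 1 and t | a²+1, and let b = q(a²+1)/t. Then S(a,b) = (q²−1)a/(tq) − S(aq, t) + S(a t*, q), where t* is any integer with t·t* ≡ 1 (mod q). -/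
lemma den_one_iff_fract (x : ℚ) : x.den = 1 ↔ Int.fract x = 0 := by
  constructor
  · intro h
    rw [← Rat.coe_int_num_of_den_eq_one h]
    exact Int.fract_intCast x.num
  · intro h
    have : x = (⌊x⌋ : ℚ) := by
      have h2 := Int.self_sub_floor x
      rw [h] at h2; linarith
    rw [this]; exact Rat.den_intCast _

lemma saw_eq_ite (x : ℚ) : saw x = if Int.fract x = 0 then 0 else Int.fract x - 1/2 := by
  unfold saw
  by_cases h : x.den = 1
  · rw [if_pos h, if_pos ((den_one_iff_fract x).mp h)]
  · rw [if_neg h, if_neg (fun hf => h ((den_one_iff_fract x).mpr hf))]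

lemma saw_of_fract_eq {x : ℚ} (h : Int.fract x = 0) : saw x = 0 := by
  rw [saw_eq_ite, if_pos h]

lemma saw_of_fract_ne {x : ℚ} (h : Int.fract x ≠ 0) : saw x = Int.fract x - 1/2 := by
  rw [saw_eq_ite, if_neg h]

lemma saw_zero : saw 0 = 0 := saw_of_fract_eq (by simp)

lemma saw_intCast (m : ℤ) : saw (m : ℚ) = 0 := saw_of_fract_eq (Int.fract_intCast m)

lemma saw_one : saw 1 = 0 := by simpa using saw_intCast 1

lemma saw_add_int (x : ℚ) (m : ℤ) : saw (x + m) = saw x := by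
  rw [saw_eq_ite, saw_eq_ite, Int.fract_add_intCast]

lemma saw_neg (x : ℚ) : saw (-x) = -saw x := by
  by_cases h : Int.fract x = 0
  · rw [saw_of_fract_eq h, saw_of_fract_eq, neg_zero]
    have : x = (⌊x⌋ : ℚ) := by
      have h2 := Int.self_sub_floor x
      rw [h] at h2; linarith
    rw [this, ← Int.cast_neg]
    exact Int.fract_intCast _
  · have h1 : Int.fract (-x) = 1 - Int.fract x := Int.fract_neg h
    have h2 : Int.fract x < 1 := Int.fract_lt_one x
    have h3 : 0 ≤ Int.fract x := Int.fract_nonneg x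
    rw [saw_of_fract_ne h, saw_of_fract_ne (by rw [h1]; intro hc; linarith), h1]
    ring

lemma fract_pos_of_ne {x : ℚ} (h : Int.fract x ≠ 0) : 0 < Int.fract x :=
  lt_of_le_of_ne (Int.fract_nonneg x) (Ne.symm h)
lemma fract_piece (f : ℚ) (hf0 : 0 ≤ f) (hf1 : f < 1) (n : ℕ) (hn : 0 < n) (i : ℕ) (hi : i < n) :
    Int.fract (f + (i:ℚ)/n) = f + (i:ℚ)/n - (if n - (⌊(n:ℚ)*f⌋).toNat ≤ i then 1 else 0) := by
  have hnQ : (0:ℚ) < n := by exact_mod_cast hn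
  have hm0 : 0 ≤ ⌊(n:ℚ)*f⌋ := Int.floor_nonneg.mpr (by positivity)
  set m : ℕ := (⌊(n:ℚ)*f⌋).toNat with hm
  have hmv : (m:ℚ) ≤ (n:ℚ)*f := by
    have h2 := Int.floor_le ((n:ℚ)*f)
    rw [← Int.toNat_of_nonneg hm0] at h2
    exact_mod_cast h2
  have hmv2 : (n:ℚ)*f < m + 1 := by
    have h2 := Int.lt_floor_add_one ((n:ℚ)*f)
    rw [← Int.toNat_of_nonneg hm0] at h2
    push_cast at h2; exact h2
  have hmn : m ≤ n := by
    have : (m:ℚ) < n := by nlinarith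
    exact_mod_cast this.le
  have hiQ : (i:ℚ) < n := by exact_mod_cast hi
  by_cases h : n - m ≤ i
  · rw [if_pos h]
    have hiq : (n:ℚ) - m ≤ i := by
      have : ((n - m : ℕ):ℚ) ≤ i := by exact_mod_cast h
      push_cast [hmn] at this; linarith
    have hge : (1:ℚ) ≤ f + (i:ℚ)/n := by
      have key : (n:ℚ) ≤ n*f + i := by nlinarith
      have h3 : (1:ℚ) ≤ ((n:ℚ)*f + i)/n := (one_le_div hnQ).mpr key
      have h4 : ((n:ℚ)*f + i)/n = f + (i:ℚ)/n := by field_simp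
      linarith [h4 ▸ h3]
    have hlt : f + (i:ℚ)/n < 2 := by
      have : (i:ℚ)/n < 1 := (div_lt_one hnQ).mpr hiQ
      linarith
    have heq : Int.fract (f + (i:ℚ)/n) = Int.fract (f + (i:ℚ)/n - 1) := by
      rw [show f + (i:ℚ)/n - 1 = f + (i:ℚ)/n + ((-1 : ℤ):ℚ) by push_cast; ring,
        Int.fract_add_intCast]
    rw [heq, Int.fract_eq_self.mpr ⟨by linarith, by linarith⟩]
  · rw [if_neg h]
    push_neg at h
    have hiq : (i:ℚ) + m + 1 ≤ n := by exact_mod_cast (show i + m + 1 ≤ n by omega)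
    have hlt : f + (i:ℚ)/n < 1 := by
      have key : (n:ℚ)*f + i < n := by nlinarith
      have h3 : ((n:ℚ)*f + i)/n < 1 := (div_lt_one hnQ).mpr key
      have h4 : ((n:ℚ)*f + i)/n = f + (i:ℚ)/n := by field_simp
      linarith [h4 ▸ h3]
    rw [Int.fract_eq_self.mpr ⟨by positivity, hlt⟩]; ring

lemma indicator_sum (n m : ℕ) (hm : m ≤ n) :
    ∑ i ∈ Finset.range n, (if n - m ≤ i then (1:ℚ) else 0) = m := by
  rw [← Finset.sum_filter]
  have h : Finset.filter (fun i => n - m ≤ i) (Finset.range n) = Finset.Ico (n - m) n := by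
    ext i; simp [Finset.mem_Ico]; omega
  rw [h, Finset.sum_const, Nat.card_Ico, Nat.sub_sub_self hm, nsmul_eq_mul, mul_one]

lemma sum_range_cast (n : ℕ) : ∑ i ∈ Finset.range n, (i:ℚ) = n*(n-1)/2 := by
  induction n with
  | zero => simp
  | succ k ih => rw [Finset.sum_range_succ, ih]; push_cast; ring

lemma sum_range_cast_sq (n : ℕ) : ∑ i ∈ Finset.range n, (i:ℚ)^2 = n*(n-1)*(2*n-1)/6 := by
  induction n with
  | zero => simp
  | succ k ih => rw [Finset.sum_range_succ, ih]; push_cast; ring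

lemma hermite (x : ℚ) (n : ℕ) (hn : 0 < n) :
    ∑ i ∈ Finset.range n, Int.fract (x + (i:ℚ)/n) = Int.fract ((n:ℚ)*x) + ((n:ℚ)-1)/2 := by
  have hnQ : (0:ℚ) < n := by exact_mod_cast hn
  set f := Int.fract x with hf
  have hf0 : 0 ≤ f := Int.fract_nonneg x
  have hf1 : f < 1 := Int.fract_lt_one x
  have hx : x = (⌊x⌋:ℚ) + f := by rw [hf]; linarith [Int.self_sub_floor x]
  have hm0 : 0 ≤ ⌊(n:ℚ)*f⌋ := Int.floor_nonneg.mpr (by positivity)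
  set m : ℕ := (⌊(n:ℚ)*f⌋).toNat with hm
  have hmv : (m:ℚ) ≤ (n:ℚ)*f := by
    have h2 := Int.floor_le ((n:ℚ)*f)
    rw [← Int.toNat_of_nonneg hm0] at h2
    exact_mod_cast h2
  have hmn : m ≤ n := by
    have : (m:ℚ) < n := by nlinarith
    exact_mod_cast this.le
  have h1 : ∀ i ∈ Finset.range n, Int.fract (x + (i:ℚ)/n)
      = f + (i:ℚ)/n - (if n - m ≤ i then 1 else 0) := by
    intro i hi
    rw [Finset.mem_range] at hi
    have h2 : x + (i:ℚ)/n = f + (i:ℚ)/n + (⌊x⌋:ℚ) := by nth_rewrite 1 [hx]; ring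
    rw [h2, Int.fract_add_intCast]
    exact fract_piece f hf0 hf1 n hn i hi
  rw [Finset.sum_congr rfl h1, Finset.sum_sub_distrib, indicator_sum n m hmn,
    Finset.sum_add_distrib, Finset.sum_const, ← Finset.sum_div, sum_range_cast,
    Finset.card_range, nsmul_eq_mul]
  have hfr : Int.fract ((n:ℚ)*x) = (n:ℚ)*f - (m : ℚ) := by
    have h2 : (n:ℚ)*x = (n:ℚ)*f + ((n*⌊x⌋ : ℤ):ℚ) := by nth_rewrite 1 [hx]; push_cast; ring
    rw [h2, Int.fract_add_intCast]
    have h3 : ((m:ℤ):ℚ) = ((⌊(n:ℚ)*f⌋:ℤ):ℚ) := by rw [hm, Int.toNat_of_nonneg hm0]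
    push_cast at h3
    rw [show Int.fract ((n:ℚ)*f) = (n:ℚ)*f - ⌊(n:ℚ)*f⌋ by exact (Int.self_sub_floor _).symm, h3]
  rw [hfr]
  field_simp
  ring
lemma fract_eq_zero_iff_exists (y : ℚ) : Int.fract y = 0 ↔ ∃ z : ℤ, y = (z:ℚ) := by
  constructor
  · intro h
    refine ⟨⌊y⌋, ?_⟩
    have h2 := Int.self_sub_floor y
    rw [h] at h2; linarith
  · rintro ⟨z, rfl⟩; exact Int.fract_intCast z

lemma saw_split (y : ℚ) : saw y = Int.fract y - 1/2 + (if Int.fract y = 0 then (1:ℚ)/2 else 0) := by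
  rw [saw_eq_ite]
  by_cases h : Int.fract y = 0 <;> simp [h]

lemma saw_dist (x : ℚ) (n : ℕ) (hn : 0 < n) :
    ∑ i ∈ Finset.range n, saw (x + (i:ℚ)/n) = saw ((n:ℚ)*x) := by
  have hnQ : (0:ℚ) < n := by exact_mod_cast hn
  have key : ∑ i ∈ Finset.range n, (if Int.fract (x + (i:ℚ)/n) = 0 then (1:ℚ)/2 else 0)
      = (if Int.fract ((n:ℚ)*x) = 0 then (1:ℚ)/2 else 0) := by
    by_cases H : Int.fract ((n:ℚ)*x) = 0
    · rw [if_pos H]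
      obtain ⟨M, hM⟩ := (fract_eq_zero_iff_exists _).mp H
      have hx : x = (M:ℚ)/n := by rw [eq_div_iff hnQ.ne']; linarith [hM]
      set i0 : ℕ := ((-M) % n).toNat with hi0
      have hnz : (n:ℤ) ≠ 0 := by exact_mod_cast hn.ne'
      have h0le : 0 ≤ (-M) % (n:ℤ) := Int.emod_nonneg _ hnz
      have h0lt : (-M) % (n:ℤ) < n := Int.emod_lt_of_pos _ (by exact_mod_cast hn)
      have hi0v : (i0:ℤ) = (-M) % n := Int.toNat_of_nonneg h0le
      have hdvd0 : (n:ℤ) ∣ (-M) - (-M) % n := by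
        have := Int.mul_ediv_add_emod (-M) n
        exact ⟨(-M)/n, by linarith⟩
      have hpt : ∀ i ∈ Finset.range n,
          (if Int.fract (x + (i:ℚ)/n) = 0 then (1:ℚ)/2 else 0)
          = (if i = i0 then (1:ℚ)/2 else 0) := by
        intro i hi
        rw [Finset.mem_range] at hi
        have hxe : x + (i:ℚ)/n = ((M + i : ℤ):ℚ)/n := by rw [hx]; push_cast; ring
        rw [hxe]
        refine if_congr ?_ rfl rfl
        constructor
        · intro h
          obtain ⟨z, hz⟩ := (fract_eq_zero_iff_exists _).mp h
          have hz2 : (M + i : ℤ) = n * z := by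
            have : ((M + i : ℤ):ℚ) = n * z := by
              rw [← hz]; field_simp
            exact_mod_cast this
          -- n ∣ M + i, and  n ∣ -M - (-M)%n, so n ∣ i - (-M)%n
          have hd2 : (n:ℤ) ∣ (i:ℤ) - (-M) % n := by
            have : (i:ℤ) - (-M) % n = (M + i) + ((-M) - (-M) % n) := by ring
            rw [this]
            exact dvd_add ⟨z, hz2⟩ hdvd0
          have hb : |(i:ℤ) - (-M) % n| < n := by
            rw [abs_lt]
            constructor <;> [linarith [Int.ofNat_nonneg i, h0lt]; skip]
            have : (i:ℤ) < n := by exact_mod_cast hi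
            linarith
          have : (i:ℤ) - (-M) % n = 0 := by
            by_contra hc
            have := Int.le_of_dvd (abs_pos.mpr hc) ((dvd_abs _ _).mpr hd2)
            linarith
          have : (i:ℤ) = (-M) % n := by linarith
          rw [← hi0v] at this
          exact_mod_cast this
        · intro h
          subst h
          apply (fract_eq_zero_iff_exists _).mpr
          obtain ⟨z, hz⟩ := hdvd0
          refine ⟨-z, ?_⟩
          have : (M + i0 : ℤ) = n * (-z) := by rw [hi0v]; linarith
          have h9 : ((M + (i0:ℤ) : ℤ):ℚ) = (n:ℚ) * ((-z : ℤ):ℚ) := by exact_mod_cast this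
          rw [h9]
          field_simp
      rw [Finset.sum_congr rfl hpt, Finset.sum_ite_eq' (Finset.range n) i0]
      rw [if_pos (Finset.mem_range.mpr (by omega))]
    · rw [if_neg H]
      apply Finset.sum_eq_zero
      intro i _
      rw [if_neg]
      intro h
      obtain ⟨z, hz⟩ := (fract_eq_zero_iff_exists _).mp h
      apply H
      apply (fract_eq_zero_iff_exists _).mpr
      refine ⟨n*z - i, ?_⟩
      have : x = (z:ℚ) - i/n := by linarith
      rw [this]; push_cast; field_simp
  calc ∑ i ∈ Finset.range n, saw (x + (i:ℚ)/n)
      = ∑ i ∈ Finset.range n, (Int.fract (x + (i:ℚ)/n) - 1/2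
          + (if Int.fract (x + (i:ℚ)/n) = 0 then (1:ℚ)/2 else 0)) := by
        exact Finset.sum_congr rfl (fun i _ => saw_split _)
    _ = (∑ i ∈ Finset.range n, Int.fract (x + (i:ℚ)/n)) - n*(1/2)
          + (if Int.fract ((n:ℚ)*x) = 0 then (1:ℚ)/2 else 0) := by
        rw [Finset.sum_add_distrib, Finset.sum_sub_distrib, Finset.sum_const, key,
          Finset.card_range, nsmul_eq_mul]
    _ = saw ((n:ℚ)*x) := by
        rw [hermite x n hn, saw_split ((n:ℚ)*x)]
        ring
lemma saw_dist' (x : ℚ) (n : ℕ) (hn : 0 < n) :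
    ∑ i ∈ Finset.range n, saw (x - (i:ℚ)/n) = saw ((n:ℚ)*x) := by
  have hnQ : (0:ℚ) < n := by exact_mod_cast hn
  rw [← Finset.sum_range_reflect]
  have h1 : ∀ j ∈ Finset.range n, saw (x - ((n - 1 - j : ℕ):ℚ)/n)
      = saw ((x - 1 + 1/n) + (j:ℚ)/n) := by
    intro j hj
    rw [Finset.mem_range] at hj
    congr 1
    have : ((n - 1 - j : ℕ):ℚ) = (n:ℚ) - 1 - j := by
      have h9 : n - 1 - j + (1 + j) = n := by omega
      have := congrArg (Nat.cast : ℕ → ℚ) h9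
      push_cast at this
      linarith
    rw [this]
    field_simp
    ring
  rw [Finset.sum_congr rfl h1, saw_dist _ n hn]
  have h2 : (n:ℚ) * (x - 1 + 1/n) = (n:ℚ)*x + (1 - n : ℤ) := by push_cast; field_simp; ring
  rw [h2, saw_add_int]

lemma sum_range_inj (n : ℕ) (e : ℕ → ℕ) (hmap : ∀ k < n, e k < n)
    (hinj : ∀ k < n, ∀ k' < n, e k = e k' → k = k') (f : ℕ → ℚ) :
    ∑ k ∈ Finset.range n, f (e k) = ∑ k ∈ Finset.range n, f k := by
  have hinj' : ∀ a ∈ Finset.range n, ∀ b ∈ Finset.range n, e a = e b → a = b := by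
    intro a ha b hb
    exact hinj a (Finset.mem_range.mp ha) b (Finset.mem_range.mp hb)
  rw [← Finset.sum_image hinj']
  congr 1
  apply Finset.eq_of_subset_of_card_le
  · intro l hl
    rw [Finset.mem_image] at hl
    obtain ⟨k, hk, rfl⟩ := hl
    exact Finset.mem_range.mpr (hmap k (Finset.mem_range.mp hk))
  · rw [Finset.card_image_of_injOn (fun a ha b hb => hinj' a ha b hb), Finset.card_range]

lemma sum_prod_inj (a b : ℕ) (e : ℕ → ℕ → ℕ) (hmap : ∀ k < a, ∀ i < b, e k i < a*b)
    (hinj : ∀ k < a, ∀ i < b, ∀ k' < a, ∀ i' < b, e k i = e k' i' → k = k' ∧ i = i')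
    (f : ℕ → ℚ) :
    ∑ k ∈ Finset.range a, ∑ i ∈ Finset.range b, f (e k i)
      = ∑ l ∈ Finset.range (a*b), f l := by
  rw [← Finset.sum_product']
  have hinj' : ∀ p ∈ Finset.range a ×ˢ Finset.range b, ∀ q ∈ Finset.range a ×ˢ Finset.range b,
      e p.1 p.2 = e q.1 q.2 → p = q := by
    intro p hp q hq h
    rw [Finset.mem_product, Finset.mem_range, Finset.mem_range] at hp hq
    obtain ⟨h1, h2⟩ := hinj p.1 hp.1 p.2 hp.2 q.1 hq.1 q.2 hq.2 h
    exact Prod.ext h1 h2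
  rw [show (∑ p ∈ Finset.range a ×ˢ Finset.range b, f (e p.1 p.2))
      = ∑ l ∈ (Finset.range a ×ˢ Finset.range b).image (fun p => e p.1 p.2), f l from
    (Finset.sum_image hinj').symm]
  congr 1
  apply Finset.eq_of_subset_of_card_le
  · intro l hl
    rw [Finset.mem_image] at hl
    obtain ⟨p, hp, rfl⟩ := hl
    rw [Finset.mem_product, Finset.mem_range, Finset.mem_range] at hp
    exact Finset.mem_range.mpr (hmap p.1 hp.1 p.2 hp.2)
  · rw [Finset.card_image_of_injOn (fun p hp q hq => hinj' p hp q hq)]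
    simp [Finset.card_product]

lemma zero_of_dvd_comb {a b x y : ℤ} (ha : 0 < a) (hb : 0 < b) (hco : IsCoprime a b)
    (hx : |x| < a) (hy : |y| < b) (h : a*b ∣ x*b - y*a) : x = 0 ∧ y = 0 := by
  have hax : a ∣ x := by
    have h1 : a ∣ x*b := by
      have h3 : a ∣ x*b - y*a := dvd_trans (dvd_mul_right a b) h
      have h2 : a ∣ y*a := Dvd.intro y (mul_comm a y)
      have := dvd_add h3 h2
      rwa [sub_add_cancel] at this
    exact hco.dvd_of_dvd_mul_right h1
  have hby : b ∣ y := by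
    have h1 : b ∣ y*a := by
      have h3 : b ∣ x*b - y*a := dvd_trans (dvd_mul_left b a) h
      have h2 : b ∣ x*b := Dvd.intro x (mul_comm b x)
      have := dvd_sub h2 h3
      rwa [sub_sub_cancel] at this
    exact hco.symm.dvd_of_dvd_mul_right h1
  constructor
  · by_contra hc
    have := Int.le_of_dvd (abs_pos.mpr hc) ((dvd_abs _ _).mpr hax)
    linarith
  · by_contra hc
    have := Int.le_of_dvd (abs_pos.mpr hc) ((dvd_abs _ _).mpr hby)
    linarith

lemma saw_div_congr (n : ℕ) (hn : 0 < n) {x y : ℤ} (h : (n:ℤ) ∣ y - x) :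
    saw ((x:ℚ)/n) = saw ((y:ℚ)/n) := by
  obtain ⟨m, hm⟩ := h
  have hnQ : (0:ℚ) < n := by exact_mod_cast hn
  have : (y:ℚ)/n = (x:ℚ)/n + (m:ℚ) := by
    have : (y:ℚ) = x + n*m := by exact_mod_cast (by linarith : y = x + n*m)
    rw [this]; field_simp
  rw [this, show ((m:ℤ):ℚ) = ((m:ℤ):ℚ) from rfl, saw_add_int]
lemma saw_nat_div {N l : ℕ} (h1 : 1 ≤ l) (h2 : l < N) : saw ((l:ℚ)/N) = (l:ℚ)/N - 1/2 := by
  have hN0 : 0 < N := lt_of_le_of_lt (Nat.zero_le l) h2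
  have hN : (0:ℚ) < N := by exact_mod_cast hN0
  have hl : (0:ℚ) < l := by exact_mod_cast h1
  have hlt : (l:ℚ)/N < 1 := (div_lt_one hN).mpr (by exact_mod_cast h2)
  have hfr : Int.fract ((l:ℚ)/N) = (l:ℚ)/N := Int.fract_eq_self.mpr ⟨by positivity, hlt⟩
  rw [saw_of_fract_ne (by rw [hfr]; exact ne_of_gt (div_pos hl hN)), hfr]

lemma V_formula (N : ℕ) (hN : 0 < N) :
    ∑ l ∈ Finset.range N, saw ((l:ℚ)/N)^2 = ((N:ℚ)-1)*((N:ℚ)-2)/(12*N) := by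
  have hNQ : (0:ℚ) < N := by exact_mod_cast hN
  have h1 : ∀ l ∈ Finset.range N, saw ((l:ℚ)/N)^2
      = ((l:ℚ)/N - 1/2)^2 - (if l = 0 then (1:ℚ)/4 else 0) := by
    intro l hl
    rw [Finset.mem_range] at hl
    by_cases h : l = 0
    · subst h; simp [saw_zero]; norm_num
    · rw [saw_nat_div (by omega) hl, if_neg h]; ring
  rw [Finset.sum_congr rfl h1, Finset.sum_sub_distrib]
  have h2 : ∑ l ∈ Finset.range N, (if l = 0 then (1:ℚ)/4 else 0) = 1/4 := by
    rw [Finset.sum_ite_eq' (Finset.range N) 0 (fun _ => (1:ℚ)/4)]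
    rw [if_pos (Finset.mem_range.mpr hN)]
  rw [h2]
  have h3 : ∀ l ∈ Finset.range N, ((l:ℚ)/N - 1/2)^2
      = (l:ℚ)^2/(N:ℚ)^2 - (l:ℚ)/N + 1/4 := by
    intro l _; field_simp; ring
  rw [Finset.sum_congr rfl h3, Finset.sum_add_distrib, Finset.sum_sub_distrib,
    ← Finset.sum_div, ← Finset.sum_div, sum_range_cast, sum_range_cast_sq,
    Finset.sum_const, Finset.card_range, nsmul_eq_mul]
  field_simp
  ring

lemma crt_sq_sum (a b : ℕ) (ha : 0 < a) (hb : 0 < b) (hco : IsCoprime (a:ℤ) (b:ℤ)) :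
    ∑ k ∈ Finset.range a, ∑ i ∈ Finset.range b, saw ((k:ℚ)/a - (i:ℚ)/b)^2
      = ∑ l ∈ Finset.range (a*b), saw ((l:ℚ)/((a*b : ℕ):ℚ))^2 := by
  have hab : 0 < a*b := Nat.mul_pos ha hb
  have habZ : (0:ℤ) < (a:ℤ)*b := by exact_mod_cast hab
  have haQ : (0:ℚ) < a := by exact_mod_cast ha
  have hbQ : (0:ℚ) < b := by exact_mod_cast hb
  set e : ℕ → ℕ → ℕ := fun k i => (((k:ℤ)*b - (i:ℤ)*a) % ((a:ℤ)*b)).toNat with he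
  have hmod : ∀ k i, (0:ℤ) ≤ ((k:ℤ)*b - (i:ℤ)*a) % ((a:ℤ)*b) := by
    intro k i; exact Int.emod_nonneg _ habZ.ne'
  have hval : ∀ k i, ((e k i : ℕ):ℤ) = ((k:ℤ)*b - (i:ℤ)*a) % ((a:ℤ)*b) := by
    intro k i; exact Int.toNat_of_nonneg (hmod k i)
  have hdvd : ∀ k i : ℕ, ((a:ℤ)*b) ∣ (((k:ℤ)*b - (i:ℤ)*a) - (e k i : ℤ)) := by
    intro k i
    rw [hval]
    have := Int.mul_ediv_add_emod ((k:ℤ)*b - (i:ℤ)*a) ((a:ℤ)*b)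
    exact ⟨((k:ℤ)*b - (i:ℤ)*a)/((a:ℤ)*b), by linarith⟩
  have hdvd' : ∀ k i : ℕ, (((a*b:ℕ)):ℤ) ∣ ((e k i : ℤ) - ((k:ℤ)*b - (i:ℤ)*a)) := by
    intro k i
    have h := (hdvd k i).neg_right
    rw [neg_sub] at h
    push_cast
    exact h
  have hstep : ∑ k ∈ Finset.range a, ∑ i ∈ Finset.range b, saw ((k:ℚ)/a - (i:ℚ)/b)^2
      = ∑ k ∈ Finset.range a, ∑ i ∈ Finset.range b, saw (((e k i : ℕ):ℚ)/((a*b:ℕ):ℚ))^2 := by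
    apply Finset.sum_congr rfl; intro k _
    apply Finset.sum_congr rfl; intro i _
    have h5 : (k:ℚ)/a - (i:ℚ)/b = (((k:ℤ)*b - (i:ℤ)*a : ℤ):ℚ)/((a*b:ℕ):ℚ) := by
      push_cast; field_simp
    rw [h5]
    have h6 := saw_div_congr (a*b) hab (x := (k:ℤ)*b - (i:ℤ)*a) (y := (e k i : ℤ))
      (hdvd' k i)
    rw [h6, show (((e k i : ℕ):ℤ):ℚ) = ((e k i : ℕ):ℚ) by push_cast; ring]
  rw [hstep]
  refine sum_prod_inj a b e ?_ ?_ (fun l => saw ((l:ℚ)/((a*b : ℕ):ℚ))^2)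
  · intro k _ i _
    have h1 : ((k:ℤ)*b - (i:ℤ)*a) % ((a:ℤ)*b) < (a:ℤ)*b := Int.emod_lt_of_pos _ habZ
    have h2 : (e k i : ℤ) < ((a*b : ℕ):ℤ) := by rw [hval]; push_cast; exact h1
    exact_mod_cast h2
  · intro k hk i hi k' hk' i' hi' hkk
    have h8 : ((a:ℤ)*b) ∣ (((k:ℤ) - k')*b - ((i:ℤ) - i')*a) := by
      have d1 := hdvd k i
      have d2 := hdvd k' i'
      have : (e k i : ℤ) = (e k' i' : ℤ) := by exact_mod_cast hkk
      have d3 := dvd_sub d1 d2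
      rw [this] at d3
      have heq : (((k:ℤ)*b - (i:ℤ)*a) - (e k' i' : ℤ)) - (((k':ℤ)*b - (i':ℤ)*a) - (e k' i' : ℤ))
          = ((k:ℤ) - k')*b - ((i:ℤ) - i')*a := by ring
      rwa [heq] at d3
    have hx : |(k:ℤ) - k'| < a := by rw [abs_lt]; omega
    have hy : |(i:ℤ) - i'| < b := by rw [abs_lt]; omega
    obtain ⟨h9, h10⟩ := zero_of_dvd_comb (by exact_mod_cast ha) (by exact_mod_cast hb)
      hco hx hy h8
    omega
lemma key_square {α β γ : ℚ} (hs : α + β + γ = 0) (hα : Int.fract α ≠ 0)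
    (hβ : Int.fract β ≠ 0) (hγ : Int.fract γ ≠ 0) :
    (saw α + saw β + saw γ)^2 = 1/4 := by
  rw [saw_of_fract_ne hα, saw_of_fract_ne hβ, saw_of_fract_ne hγ]
  have h1 : Int.fract α = α - ⌊α⌋ := (Int.self_sub_floor α).symm
  have h2 : Int.fract β = β - ⌊β⌋ := (Int.self_sub_floor β).symm
  have h3 : Int.fract γ = γ - ⌊γ⌋ := (Int.self_sub_floor γ).symm
  set Z : ℤ := ⌊α⌋ + ⌊β⌋ + ⌊γ⌋ with hZ
  have hF : Int.fract α + Int.fract β + Int.fract γ = -(Z:ℚ) := by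
    rw [h1, h2, h3, hZ]; push_cast; linarith
  have hb1 : 0 < Int.fract α + Int.fract β + Int.fract γ := by
    have := fract_pos_of_ne hα
    have := fract_pos_of_ne hβ
    have := fract_pos_of_ne hγ
    linarith
  have hb2 : Int.fract α + Int.fract β + Int.fract γ < 3 := by
    have := Int.fract_lt_one α
    have := Int.fract_lt_one β
    have := Int.fract_lt_one γ
    linarith
  have hZb : -3 < (Z:ℚ) ∧ (Z:ℚ) < 0 := by constructor <;> linarith [hF]
  have hZi : Z = -1 ∨ Z = -2 := by
    have h4 : -3 < Z := by exact_mod_cast hZb.1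
    have h5 : Z < 0 := by exact_mod_cast hZb.2
    omega
  have hsum : Int.fract α - 1/2 + (Int.fract β - 1/2) + (Int.fract γ - 1/2)
      = -(Z:ℚ) - 3/2 := by linarith [hF]
  rw [hsum]
  rcases hZi with h | h <;> rw [h] <;> norm_num

lemma fract_pair_ne (a b : ℕ) (ha : 0 < a) (hb : 0 < b) (hco : IsCoprime (a:ℤ) (b:ℤ))
    {k i : ℕ} (hk : k < a) (hi : i < b) (hne : ¬(k = 0 ∧ i = 0)) :
    Int.fract ((k:ℚ)/a - (i:ℚ)/b) ≠ 0 := by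
  intro h
  obtain ⟨z, hz⟩ := (fract_eq_zero_iff_exists _).mp h
  have haQ : (0:ℚ) < a := by exact_mod_cast ha
  have hbQ : (0:ℚ) < b := by exact_mod_cast hb
  have hzz : ((k:ℤ)*b - (i:ℤ)*a : ℚ) = ((z * (a*b) : ℤ):ℚ) := by
    push_cast
    field_simp at hz
    nlinarith [hz]
  have hzz' : (k:ℤ)*b - (i:ℤ)*a = z * ((a:ℤ)*b) := by exact_mod_cast hzz
  have hd : ((a:ℤ)*b) ∣ ((k:ℤ)*b - (i:ℤ)*a) := ⟨z, by linarith⟩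
  have hx : |(k:ℤ)| < a := by rw [abs_lt]; omega
  have hy : |(i:ℤ)| < b := by rw [abs_lt]; omega
  obtain ⟨h1, h2⟩ := zero_of_dvd_comb (by exact_mod_cast ha) (by exact_mod_cast hb) hco hx hy hd
  exact hne ⟨by exact_mod_cast h1, by exact_mod_cast h2⟩
lemma ite_and_split (p q : Prop) [Decidable p] [Decidable q] (x : ℚ) :
    (if p ∧ q then x else 0) = (if p then (if q then x else 0) else 0) := by
  by_cases hp : p <;> by_cases hq : q <;> simp [hp, hq]

lemma D_sum (a b c : ℕ) (ha : 0 < a) (hb : 0 < b) (hc : 0 < c)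
    (hab : IsCoprime (a:ℤ) (b:ℤ)) (hbc : IsCoprime (b:ℤ) (c:ℤ)) (hca : IsCoprime (c:ℤ) (a:ℤ)) :
    ∑ k ∈ Finset.range a, ∑ i ∈ Finset.range b, ∑ j ∈ Finset.range c,
      (saw ((k:ℚ)/a - (i:ℚ)/b) + saw ((i:ℚ)/b - (j:ℚ)/c) + saw ((j:ℚ)/c - (k:ℚ)/a))^2
    = ((a:ℚ)*b*c - a - b - c + 2)/4 := by
  have hpt : ∀ k ∈ Finset.range a, ∀ i ∈ Finset.range b, ∀ j ∈ Finset.range c,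
      (saw ((k:ℚ)/a - (i:ℚ)/b) + saw ((i:ℚ)/b - (j:ℚ)/c) + saw ((j:ℚ)/c - (k:ℚ)/a))^2
      = 1/4 - (if k = 0 ∧ i = 0 then (1:ℚ)/4 else 0) - (if i = 0 ∧ j = 0 then (1:ℚ)/4 else 0)
        - (if j = 0 ∧ k = 0 then (1:ℚ)/4 else 0)
        + (if k = 0 ∧ i = 0 ∧ j = 0 then (1:ℚ)/2 else 0) := by
    intro k hk i hi j hj
    rw [Finset.mem_range] at hk hi hj
    by_cases hk0 : k = 0 <;> by_cases hi0 : i = 0 <;> by_cases hj0 : j = 0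
    · subst hk0; subst hi0; subst hj0
      simp only [Nat.cast_zero, zero_div, zero_sub, sub_zero, neg_zero, saw_zero]
      norm_num
    · subst hk0; subst hi0
      simp only [Nat.cast_zero, zero_div, zero_sub, sub_zero, sub_self, saw_zero, saw_neg]
      simp [hj0]
    · subst hk0; subst hj0
      simp only [Nat.cast_zero, zero_div, zero_sub, sub_zero, sub_self, saw_zero, saw_neg]
      simp [hi0]
    · subst hk0
      rw [if_neg (by tauto), if_neg (by tauto), if_neg (by tauto), if_neg (by tauto)]
      rw [key_square (by ring) (fract_pair_ne a b ha hb hab hk hi (by tauto))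
        (fract_pair_ne b c hb hc hbc hi hj (by tauto))
        (fract_pair_ne c a hc ha hca hj hk (by tauto))]
      ring
    · subst hi0; subst hj0
      simp only [Nat.cast_zero, zero_div, zero_sub, sub_zero, sub_self, saw_zero, saw_neg]
      simp [hk0]
    · subst hi0
      rw [if_neg (by tauto), if_neg (by tauto), if_neg (by tauto), if_neg (by tauto)]
      rw [key_square (by ring) (fract_pair_ne a b ha hb hab hk hi (by tauto))
        (fract_pair_ne b c hb hc hbc hi hj (by tauto))
        (fract_pair_ne c a hc ha hca hj hk (by tauto))]
      ring
    · subst hj0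
      rw [if_neg (by tauto), if_neg (by tauto), if_neg (by tauto), if_neg (by tauto)]
      rw [key_square (by ring) (fract_pair_ne a b ha hb hab hk hi (by tauto))
        (fract_pair_ne b c hb hc hbc hi hj (by tauto))
        (fract_pair_ne c a hc ha hca hj hk (by tauto))]
      ring
    · rw [if_neg (by tauto), if_neg (by tauto), if_neg (by tauto), if_neg (by tauto)]
      rw [key_square (by ring) (fract_pair_ne a b ha hb hab hk hi (by tauto))
        (fract_pair_ne b c hb hc hbc hi hj (by tauto))
        (fract_pair_ne c a hc ha hca hj hk (by tauto))]
      ring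
  have hrw := Finset.sum_congr rfl (fun k hk => Finset.sum_congr rfl (fun i hi =>
    Finset.sum_congr rfl (fun j hj => hpt k hk i hi j hj)))
  rw [hrw]
  have h0a : 0 ∈ Finset.range a := Finset.mem_range.mpr ha
  have h0b : 0 ∈ Finset.range b := Finset.mem_range.mpr hb
  have h0c : 0 ∈ Finset.range c := Finset.mem_range.mpr hc
  -- split everything
  have split : ∀ k i j : ℕ,
      (1:ℚ)/4 - (if k = 0 ∧ i = 0 then (1:ℚ)/4 else 0) - (if i = 0 ∧ j = 0 then (1:ℚ)/4 else 0)
        - (if j = 0 ∧ k = 0 then (1:ℚ)/4 else 0)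
        + (if k = 0 ∧ i = 0 ∧ j = 0 then (1:ℚ)/2 else 0)
      = (1:ℚ)/4 - (if k = 0 ∧ i = 0 then (1:ℚ)/4 else 0) - (if i = 0 ∧ j = 0 then (1:ℚ)/4 else 0)
        - (if j = 0 ∧ k = 0 then (1:ℚ)/4 else 0)
        + (if k = 0 ∧ i = 0 ∧ j = 0 then (1:ℚ)/2 else 0) := fun _ _ _ => rfl
  clear split
  -- compute the five pieces
  have P0 : ∑ k ∈ Finset.range a, ∑ i ∈ Finset.range b, ∑ j ∈ Finset.range c, (1:ℚ)/4
      = (a:ℚ)*b*c/4 := by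
    simp [Finset.sum_const, nsmul_eq_mul]; ring
  have P1 : ∑ k ∈ Finset.range a, ∑ i ∈ Finset.range b, ∑ j ∈ Finset.range c,
      (if k = 0 ∧ i = 0 then (1:ℚ)/4 else 0) = (c:ℚ)/4 := by
    have h1 : ∀ k i : ℕ, ∑ j ∈ Finset.range c, (if k = 0 ∧ i = 0 then (1:ℚ)/4 else 0)
        = (c:ℚ) * (if k = 0 ∧ i = 0 then (1:ℚ)/4 else 0) := by
      intro k i; rw [Finset.sum_const, Finset.card_range, nsmul_eq_mul]
    simp only [h1]
    have h2 : ∀ k : ℕ, ∑ i ∈ Finset.range b, (c:ℚ) * (if k = 0 ∧ i = 0 then (1:ℚ)/4 else 0)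
        = (c:ℚ) * (if k = 0 then (1:ℚ)/4 else 0) := by
      intro k
      rw [← Finset.mul_sum]
      congr 1
      have : ∀ i : ℕ, (if k = 0 ∧ i = 0 then (1:ℚ)/4 else 0)
          = (if i = 0 then (if k = 0 then (1:ℚ)/4 else 0) else 0) := by
        intro i; by_cases h : k = 0 <;> by_cases h' : i = 0 <;> simp [h, h']
      simp only [this]
      rw [Finset.sum_ite_eq' (Finset.range b) 0, if_pos h0b]
    simp only [h2]
    rw [← Finset.mul_sum, Finset.sum_ite_eq' (Finset.range a) 0, if_pos h0a]
    ring
  have P2 : ∑ k ∈ Finset.range a, ∑ i ∈ Finset.range b, ∑ j ∈ Finset.range c,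
      (if i = 0 ∧ j = 0 then (1:ℚ)/4 else 0) = (a:ℚ)/4 := by
    have h1 : ∀ i : ℕ, ∑ j ∈ Finset.range c, (if i = 0 ∧ j = 0 then (1:ℚ)/4 else 0)
        = (if i = 0 then (1:ℚ)/4 else 0) := by
      intro i
      have : ∀ j : ℕ, (if i = 0 ∧ j = 0 then (1:ℚ)/4 else 0)
          = (if j = 0 then (if i = 0 then (1:ℚ)/4 else 0) else 0) := by
        intro j; by_cases h : i = 0 <;> by_cases h' : j = 0 <;> simp [h, h']
      simp only [this]
      rw [Finset.sum_ite_eq' (Finset.range c) 0, if_pos h0c]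
    simp only [h1]
    have h2 : ∑ i ∈ Finset.range b, (if i = 0 then (1:ℚ)/4 else 0) = 1/4 := by
      rw [Finset.sum_ite_eq' (Finset.range b) 0, if_pos h0b]
    simp only [h2, Finset.sum_const, Finset.card_range, nsmul_eq_mul]
    ring
  have P3 : ∑ k ∈ Finset.range a, ∑ i ∈ Finset.range b, ∑ j ∈ Finset.range c,
      (if j = 0 ∧ k = 0 then (1:ℚ)/4 else 0) = (b:ℚ)/4 := by
    have h1 : ∀ k : ℕ, ∑ j ∈ Finset.range c, (if j = 0 ∧ k = 0 then (1:ℚ)/4 else 0)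
        = (if k = 0 then (1:ℚ)/4 else 0) := by
      intro k
      have : ∀ j : ℕ, (if j = 0 ∧ k = 0 then (1:ℚ)/4 else 0)
          = (if j = 0 then (if k = 0 then (1:ℚ)/4 else 0) else 0) := by
        intro j; by_cases h : k = 0 <;> by_cases h' : j = 0 <;> simp [h, h']
      simp only [this]
      rw [Finset.sum_ite_eq' (Finset.range c) 0, if_pos h0c]
    simp only [h1]
    have h2 : ∀ k : ℕ, ∑ i ∈ Finset.range b, (if k = 0 then (1:ℚ)/4 else 0)
        = (b:ℚ) * (if k = 0 then (1:ℚ)/4 else 0) := by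
      intro k; rw [Finset.sum_const, Finset.card_range, nsmul_eq_mul]
    simp only [h2]
    rw [← Finset.mul_sum, Finset.sum_ite_eq' (Finset.range a) 0, if_pos h0a]
    ring
  have P4 : ∑ k ∈ Finset.range a, ∑ i ∈ Finset.range b, ∑ j ∈ Finset.range c,
      (if k = 0 ∧ i = 0 ∧ j = 0 then (1:ℚ)/2 else 0) = 1/2 := by
    have h1 : ∀ k i : ℕ, ∑ j ∈ Finset.range c, (if k = 0 ∧ i = 0 ∧ j = 0 then (1:ℚ)/2 else 0)
        = (if k = 0 ∧ i = 0 then (1:ℚ)/2 else 0) := by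
      intro k i
      have : ∀ j : ℕ, (if k = 0 ∧ i = 0 ∧ j = 0 then (1:ℚ)/2 else 0)
          = (if j = 0 then (if k = 0 ∧ i = 0 then (1:ℚ)/2 else 0) else 0) := by
        intro j; by_cases h : k = 0 <;> by_cases h' : i = 0 <;> by_cases h'' : j = 0 <;>
          simp [h, h', h'']
      simp only [this]
      rw [Finset.sum_ite_eq' (Finset.range c) 0, if_pos h0c]
    simp only [h1]
    have h2 : ∀ k : ℕ, ∑ i ∈ Finset.range b, (if k = 0 ∧ i = 0 then (1:ℚ)/2 else 0)
        = (if k = 0 then (1:ℚ)/2 else 0) := by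
      intro k
      have : ∀ i : ℕ, (if k = 0 ∧ i = 0 then (1:ℚ)/2 else 0)
          = (if i = 0 then (if k = 0 then (1:ℚ)/2 else 0) else 0) := by
        intro i; by_cases h : k = 0 <;> by_cases h' : i = 0 <;> simp [h, h']
      simp only [this]
      rw [Finset.sum_ite_eq' (Finset.range b) 0, if_pos h0b]
    simp only [h2]
    rw [Finset.sum_ite_eq' (Finset.range a) 0, if_pos h0a]
  calc ∑ k ∈ Finset.range a, ∑ i ∈ Finset.range b, ∑ j ∈ Finset.range c,
      ((1:ℚ)/4 - (if k = 0 ∧ i = 0 then (1:ℚ)/4 else 0) - (if i = 0 ∧ j = 0 then (1:ℚ)/4 else 0)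
        - (if j = 0 ∧ k = 0 then (1:ℚ)/4 else 0)
        + (if k = 0 ∧ i = 0 ∧ j = 0 then (1:ℚ)/2 else 0))
      = (∑ k ∈ Finset.range a, ∑ i ∈ Finset.range b, ∑ j ∈ Finset.range c, (1:ℚ)/4)
        - (∑ k ∈ Finset.range a, ∑ i ∈ Finset.range b, ∑ j ∈ Finset.range c,
            (if k = 0 ∧ i = 0 then (1:ℚ)/4 else 0))
        - (∑ k ∈ Finset.range a, ∑ i ∈ Finset.range b, ∑ j ∈ Finset.range c,
            (if i = 0 ∧ j = 0 then (1:ℚ)/4 else 0))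
        - (∑ k ∈ Finset.range a, ∑ i ∈ Finset.range b, ∑ j ∈ Finset.range c,
            (if j = 0 ∧ k = 0 then (1:ℚ)/4 else 0))
        + (∑ k ∈ Finset.range a, ∑ i ∈ Finset.range b, ∑ j ∈ Finset.range c,
            (if k = 0 ∧ i = 0 ∧ j = 0 then (1:ℚ)/2 else 0)) := by
        simp only [Finset.sum_add_distrib, Finset.sum_sub_distrib]
    _ = (a:ℚ)*b*c/4 - (c:ℚ)/4 - (a:ℚ)/4 - (b:ℚ)/4 + 1/2 := by rw [P0, P1, P2, P3, P4]
    _ = ((a:ℚ)*b*c - a - b - c + 2)/4 := by ring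
theorem triple_sum (a b c : ℕ) (ha : 0 < a) (hb : 0 < b) (hc : 0 < c)
    (hab : IsCoprime (a:ℤ) (b:ℤ)) (hbc : IsCoprime (b:ℤ) (c:ℤ)) (hca : IsCoprime (c:ℤ) (a:ℤ)) :
    (∑ k ∈ Finset.range a, saw ((b:ℚ)*((k:ℚ)/a)) * saw ((c:ℚ)*((k:ℚ)/a)))
    + (∑ i ∈ Finset.range b, saw ((c:ℚ)*((i:ℚ)/b)) * saw ((a:ℚ)*((i:ℚ)/b)))
    + (∑ j ∈ Finset.range c, saw ((a:ℚ)*((j:ℚ)/c)) * saw ((b:ℚ)*((j:ℚ)/c)))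
    = -1/4 + ((a:ℚ)^2 + (b:ℚ)^2 + (c:ℚ)^2)/(12*a*b*c) := by
  have haQ : (0:ℚ) < a := by exact_mod_cast ha
  have hbQ : (0:ℚ) < b := by exact_mod_cast hb
  have hcQ : (0:ℚ) < c := by exact_mod_cast hc
  -- expand via distribution
  have e1 : ∑ k ∈ Finset.range a, saw ((b:ℚ)*((k:ℚ)/a)) * saw ((c:ℚ)*((k:ℚ)/a))
      = ∑ k ∈ Finset.range a, ∑ i ∈ Finset.range b, ∑ j ∈ Finset.range c,
        saw ((k:ℚ)/a - (i:ℚ)/b) * saw ((k:ℚ)/a - (j:ℚ)/c) := by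
    apply Finset.sum_congr rfl; intro k _
    rw [← saw_dist' ((k:ℚ)/a) b hb, ← saw_dist' ((k:ℚ)/a) c hc, Finset.sum_mul_sum]
  have e2 : ∑ i ∈ Finset.range b, saw ((c:ℚ)*((i:ℚ)/b)) * saw ((a:ℚ)*((i:ℚ)/b))
      = ∑ i ∈ Finset.range b, ∑ j ∈ Finset.range c, ∑ k ∈ Finset.range a,
        saw ((i:ℚ)/b - (j:ℚ)/c) * saw ((i:ℚ)/b - (k:ℚ)/a) := by
    apply Finset.sum_congr rfl; intro i _
    rw [← saw_dist' ((i:ℚ)/b) c hc, ← saw_dist' ((i:ℚ)/b) a ha, Finset.sum_mul_sum]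
  have e3 : ∑ j ∈ Finset.range c, saw ((a:ℚ)*((j:ℚ)/c)) * saw ((b:ℚ)*((j:ℚ)/c))
      = ∑ j ∈ Finset.range c, ∑ k ∈ Finset.range a, ∑ i ∈ Finset.range b,
        saw ((j:ℚ)/c - (k:ℚ)/a) * saw ((j:ℚ)/c - (i:ℚ)/b) := by
    apply Finset.sum_congr rfl; intro j _
    rw [← saw_dist' ((j:ℚ)/c) a ha, ← saw_dist' ((j:ℚ)/c) b hb, Finset.sum_mul_sum]
  rw [e1, e2, e3]
  -- reorder
  have r2 : ∑ i ∈ Finset.range b, ∑ j ∈ Finset.range c, ∑ k ∈ Finset.range a,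
        saw ((i:ℚ)/b - (j:ℚ)/c) * saw ((i:ℚ)/b - (k:ℚ)/a)
      = ∑ k ∈ Finset.range a, ∑ i ∈ Finset.range b, ∑ j ∈ Finset.range c,
        saw ((i:ℚ)/b - (j:ℚ)/c) * saw ((i:ℚ)/b - (k:ℚ)/a) := by
    calc ∑ i ∈ Finset.range b, ∑ j ∈ Finset.range c, ∑ k ∈ Finset.range a,
          saw ((i:ℚ)/b - (j:ℚ)/c) * saw ((i:ℚ)/b - (k:ℚ)/a)
        = ∑ i ∈ Finset.range b, ∑ k ∈ Finset.range a, ∑ j ∈ Finset.range c,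
          saw ((i:ℚ)/b - (j:ℚ)/c) * saw ((i:ℚ)/b - (k:ℚ)/a) :=
          Finset.sum_congr rfl (fun i _ => Finset.sum_comm)
      _ = ∑ k ∈ Finset.range a, ∑ i ∈ Finset.range b, ∑ j ∈ Finset.range c,
          saw ((i:ℚ)/b - (j:ℚ)/c) * saw ((i:ℚ)/b - (k:ℚ)/a) := Finset.sum_comm
  have r3 : ∑ j ∈ Finset.range c, ∑ k ∈ Finset.range a, ∑ i ∈ Finset.range b,
        saw ((j:ℚ)/c - (k:ℚ)/a) * saw ((j:ℚ)/c - (i:ℚ)/b)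
      = ∑ k ∈ Finset.range a, ∑ i ∈ Finset.range b, ∑ j ∈ Finset.range c,
        saw ((j:ℚ)/c - (k:ℚ)/a) * saw ((j:ℚ)/c - (i:ℚ)/b) := by
    calc ∑ j ∈ Finset.range c, ∑ k ∈ Finset.range a, ∑ i ∈ Finset.range b,
          saw ((j:ℚ)/c - (k:ℚ)/a) * saw ((j:ℚ)/c - (i:ℚ)/b)
        = ∑ k ∈ Finset.range a, ∑ j ∈ Finset.range c, ∑ i ∈ Finset.range b,
          saw ((j:ℚ)/c - (k:ℚ)/a) * saw ((j:ℚ)/c - (i:ℚ)/b) := Finset.sum_comm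
      _ = ∑ k ∈ Finset.range a, ∑ i ∈ Finset.range b, ∑ j ∈ Finset.range c,
          saw ((j:ℚ)/c - (k:ℚ)/a) * saw ((j:ℚ)/c - (i:ℚ)/b) :=
          Finset.sum_congr rfl (fun k _ => Finset.sum_comm)
  rw [r2, r3]
  simp only [← Finset.sum_add_distrib]
  -- pointwise rewrite
  have hpt : ∀ k i j : ℕ,
      saw ((k:ℚ)/a - (i:ℚ)/b) * saw ((k:ℚ)/a - (j:ℚ)/c)
      + saw ((i:ℚ)/b - (j:ℚ)/c) * saw ((i:ℚ)/b - (k:ℚ)/a)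
      + saw ((j:ℚ)/c - (k:ℚ)/a) * saw ((j:ℚ)/c - (i:ℚ)/b)
      = saw ((k:ℚ)/a - (i:ℚ)/b)^2/2 + saw ((i:ℚ)/b - (j:ℚ)/c)^2/2
        + saw ((j:ℚ)/c - (k:ℚ)/a)^2/2
        - (saw ((k:ℚ)/a - (i:ℚ)/b) + saw ((i:ℚ)/b - (j:ℚ)/c) + saw ((j:ℚ)/c - (k:ℚ)/a))^2/2 := by
    intro k i j
    rw [show (k:ℚ)/a - (j:ℚ)/c = -((j:ℚ)/c - (k:ℚ)/a) by ring, saw_neg,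
      show (i:ℚ)/b - (k:ℚ)/a = -((k:ℚ)/a - (i:ℚ)/b) by ring, saw_neg,
      show (j:ℚ)/c - (i:ℚ)/b = -((i:ℚ)/b - (j:ℚ)/c) by ring, saw_neg]
    ring
  simp only [hpt]
  simp only [Finset.sum_sub_distrib, Finset.sum_add_distrib]
  -- the square sums
  have hXj : ∀ k i : ℕ, ∑ j ∈ Finset.range c, saw ((k:ℚ)/a - (i:ℚ)/b)^2/2
      = (c:ℚ) * (saw ((k:ℚ)/a - (i:ℚ)/b)^2/2) := by
    intro k i; rw [Finset.sum_const, Finset.card_range, nsmul_eq_mul]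
  have hX : ∑ k ∈ Finset.range a, ∑ i ∈ Finset.range b, ∑ j ∈ Finset.range c,
      saw ((k:ℚ)/a - (i:ℚ)/b)^2/2
      = (c:ℚ) * ((((a*b:ℕ):ℚ)-1)*(((a*b:ℕ):ℚ)-2)/(12*((a*b:ℕ):ℚ)))/2 := by
    simp only [hXj, ← Finset.mul_sum]
    have : ∑ k ∈ Finset.range a, ∑ i ∈ Finset.range b, saw ((k:ℚ)/a - (i:ℚ)/b)^2/2
        = (∑ k ∈ Finset.range a, ∑ i ∈ Finset.range b, saw ((k:ℚ)/a - (i:ℚ)/b)^2)/2 := by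
      simp only [← Finset.sum_div]
    rw [this, crt_sq_sum a b ha hb hab, V_formula (a*b) (Nat.mul_pos ha hb)]
    ring
  have hY : ∑ k ∈ Finset.range a, ∑ i ∈ Finset.range b, ∑ j ∈ Finset.range c,
      saw ((i:ℚ)/b - (j:ℚ)/c)^2/2
      = (a:ℚ) * ((((b*c:ℕ):ℚ)-1)*(((b*c:ℕ):ℚ)-2)/(12*((b*c:ℕ):ℚ)))/2 := by
    rw [Finset.sum_const, Finset.card_range, nsmul_eq_mul]
    have : ∑ i ∈ Finset.range b, ∑ j ∈ Finset.range c, saw ((i:ℚ)/b - (j:ℚ)/c)^2/2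
        = (∑ i ∈ Finset.range b, ∑ j ∈ Finset.range c, saw ((i:ℚ)/b - (j:ℚ)/c)^2)/2 := by
      simp only [← Finset.sum_div]
    rw [this, crt_sq_sum b c hb hc hbc, V_formula (b*c) (Nat.mul_pos hb hc)]
    ring
  have hZi : ∀ k : ℕ, ∑ i ∈ Finset.range b, ∑ j ∈ Finset.range c,
      saw ((j:ℚ)/c - (k:ℚ)/a)^2/2
      = (b:ℚ) * ∑ j ∈ Finset.range c, saw ((j:ℚ)/c - (k:ℚ)/a)^2/2 := by
    intro k; rw [Finset.sum_const, Finset.card_range, nsmul_eq_mul]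
  have hZ : ∑ k ∈ Finset.range a, ∑ i ∈ Finset.range b, ∑ j ∈ Finset.range c,
      saw ((j:ℚ)/c - (k:ℚ)/a)^2/2
      = (b:ℚ) * ((((c*a:ℕ):ℚ)-1)*(((c*a:ℕ):ℚ)-2)/(12*((c*a:ℕ):ℚ)))/2 := by
    simp only [hZi, ← Finset.mul_sum]
    have h5 : ∑ k ∈ Finset.range a, ∑ j ∈ Finset.range c, saw ((j:ℚ)/c - (k:ℚ)/a)^2/2
        = ∑ j ∈ Finset.range c, ∑ k ∈ Finset.range a, saw ((j:ℚ)/c - (k:ℚ)/a)^2/2 :=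
      Finset.sum_comm
    rw [h5]
    have : ∑ j ∈ Finset.range c, ∑ k ∈ Finset.range a, saw ((j:ℚ)/c - (k:ℚ)/a)^2/2
        = (∑ j ∈ Finset.range c, ∑ k ∈ Finset.range a, saw ((j:ℚ)/c - (k:ℚ)/a)^2)/2 := by
      simp only [← Finset.sum_div]
    rw [this, crt_sq_sum c a hc ha hca, V_formula (c*a) (Nat.mul_pos hc ha)]
    ring
  have hD : ∑ k ∈ Finset.range a, ∑ i ∈ Finset.range b, ∑ j ∈ Finset.range c,
      (saw ((k:ℚ)/a - (i:ℚ)/b) + saw ((i:ℚ)/b - (j:ℚ)/c) + saw ((j:ℚ)/c - (k:ℚ)/a))^2/2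
      = (((a:ℚ)*b*c - a - b - c + 2)/4)/2 := by
    have : ∀ k i j : ℕ,
        (saw ((k:ℚ)/a - (i:ℚ)/b) + saw ((i:ℚ)/b - (j:ℚ)/c) + saw ((j:ℚ)/c - (k:ℚ)/a))^2/2
        = (saw ((k:ℚ)/a - (i:ℚ)/b) + saw ((i:ℚ)/b - (j:ℚ)/c) + saw ((j:ℚ)/c - (k:ℚ)/a))^2 * (1/2) := by
      intro k i j; ring
    simp only [this, ← Finset.sum_mul]
    rw [D_sum a b c ha hb hc hab hbc hca]
    ring
  rw [hX, hY, hZ, hD]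
  push_cast
  field_simp
  ring
def sig (n : ℕ) (u v : ℤ) : ℚ :=
  ∑ k ∈ Finset.range n, saw (((u*k : ℤ):ℚ)/n) * saw (((v*k : ℤ):ℚ)/n)

lemma int_eq_zero_of_dvd_lt {n x : ℤ} (h : n ∣ x) (hb : |x| < n) : x = 0 := by
  by_contra hc
  have := Int.le_of_dvd (abs_pos.mpr hc) ((dvd_abs _ _).mpr h)
  linarith

lemma sig_comm (n : ℕ) (u v : ℤ) : sig n u v = sig n v u := by
  unfold sig
  exact Finset.sum_congr rfl (fun k _ => mul_comm _ _)

lemma sig_congr₁ (n : ℕ) (hn : 0 < n) (u u' v : ℤ) (h : (n:ℤ) ∣ u' - u) :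
    sig n u v = sig n u' v := by
  unfold sig
  apply Finset.sum_congr rfl; intro k _
  congr 1
  exact saw_div_congr n hn (x := u*k) (y := u'*k)
    (by have : u'*k - u*k = (u' - u)*k := by ring
        rw [this]; exact Dvd.dvd.mul_right h _)

lemma sig_congr₂ (n : ℕ) (hn : 0 < n) (u v v' : ℤ) (h : (n:ℤ) ∣ v' - v) :
    sig n u v = sig n u v' := by
  rw [sig_comm, sig_congr₁ n hn v v' u h, sig_comm]

lemma sig_neg₂ (n : ℕ) (u v : ℤ) : sig n u (-v) = - sig n u v := by
  unfold sig
  rw [← Finset.sum_neg_distrib]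
  apply Finset.sum_congr rfl; intro k _
  have : (((-v)*k : ℤ):ℚ) = -((v*k : ℤ):ℚ) := by push_cast; ring
  rw [this, neg_div, saw_neg]
  ring

lemma sig_unit (n : ℕ) (hn : 0 < n) (u v w : ℤ) (hco : IsCoprime (n:ℤ) w) :
    sig n (w*u) (w*v) = sig n u v := by
  have hnZ : (0:ℤ) < n := by exact_mod_cast hn
  set e : ℕ → ℕ := fun k => ((w*k) % n).toNat with he
  have hval : ∀ k : ℕ, ((e k : ℕ):ℤ) = (w*k) % n := by
    intro k; exact Int.toNat_of_nonneg (Int.emod_nonneg _ hnZ.ne')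
  have hdvd : ∀ k : ℕ, (n:ℤ) ∣ ((e k : ℤ) - w*k) := by
    intro k
    rw [hval]
    have := Int.mul_ediv_add_emod (w*k) n
    exact ⟨-((w*(k:ℤ))/n), by linarith⟩
  have key : ∀ k : ℕ, saw ((((w*u)*k : ℤ):ℚ)/n) * saw ((((w*v)*k : ℤ):ℚ)/n)
      = saw (((u * (e k) : ℤ):ℚ)/n) * saw (((v * (e k) : ℤ):ℚ)/n) := by
    intro k
    congr 1
    · apply saw_div_congr n hn
      have : u * (e k : ℤ) - (w*u)*k = u * ((e k : ℤ) - w*k) := by ring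
      rw [this]; exact Dvd.dvd.mul_left (hdvd k) _
    · apply saw_div_congr n hn
      have : v * (e k : ℤ) - (w*v)*k = v * ((e k : ℤ) - w*k) := by ring
      rw [this]; exact Dvd.dvd.mul_left (hdvd k) _
  unfold sig
  rw [Finset.sum_congr rfl (fun k _ => key k)]
  refine sum_range_inj n e ?_ ?_ (fun k => saw (((u*k : ℤ):ℚ)/n) * saw (((v*k : ℤ):ℚ)/n))
  · intro k hk
    have h1 : (w*(k:ℤ)) % n < n := Int.emod_lt_of_pos _ hnZ
    have h2 : (e k : ℤ) < n := by rw [hval]; exact h1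
    exact_mod_cast h2
  · intro k hk k' hk' hkk
    have h1 : ((e k : ℕ):ℤ) = ((e k' : ℕ):ℤ) := by exact_mod_cast hkk
    rw [hval, hval] at h1
    have h2 : (n:ℤ) ∣ w*((k:ℤ) - k') := by
      have d1 := hdvd k
      have d2 := hdvd k'
      rw [hkk] at d1
      have d3 := dvd_sub d2 d1
      have heq : ((e k' : ℤ) - w*k') - ((e k' : ℤ) - w*k) = w*((k:ℤ) - k') := by ring
      rwa [heq] at d3
    have h3 : (n:ℤ) ∣ ((k:ℤ) - k') := hco.dvd_of_dvd_mul_left h2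
    have h4 : (k:ℤ) - k' = 0 := int_eq_zero_of_dvd_lt h3 (by rw [abs_lt]; omega)
    omega

lemma S_eq_sig (x b : ℤ) (hb : 0 < b) : S x b = 12 * sig b.toNat 1 x := by
  have hbN : (b.toNat : ℤ) = b := Int.toNat_of_nonneg hb.le
  have hbQ : (b:ℚ) = (b.toNat : ℚ) := by exact_mod_cast hbN.symm
  have hbQ0 : (0:ℚ) < (b.toNat:ℚ) := by
    have : 0 < b.toNat := by omega
    exact_mod_cast this
  set N := b.toNat with hN
  unfold S sig
  congr 1
  have hsummand : ∀ k : ℕ, saw ((k : ℚ) / (b : ℚ)) * saw (((x : ℚ) * k) / (b : ℚ))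
      = saw (((1*k : ℤ):ℚ)/(N:ℚ)) * saw (((x*k : ℤ):ℚ)/(N:ℚ)) := by
    intro k
    rw [hbQ]
    congr 2
    · push_cast; ring
    · push_cast; ring
  set g : ℕ → ℚ := fun k => saw ((k : ℚ) / (b : ℚ)) * saw (((x : ℚ) * k) / (b : ℚ)) with hg
  have hg0 : g 0 = 0 := by
    simp only [hg, Nat.cast_zero, zero_div, mul_zero, saw_zero, zero_mul]
  have hgN : g N = 0 := by
    simp only [hg]
    rw [hbQ, div_self hbQ0.ne', saw_one, zero_mul]
  calc ∑ k ∈ Finset.Icc 1 N, g k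
      = ∑ i ∈ Finset.range (N+1-1), g (1+i) := by
        rw [← Finset.Ico_add_one_right_eq_Icc, Finset.sum_Ico_eq_sum_range]
    _ = ∑ i ∈ Finset.range N, g (i+1) := by
        apply Finset.sum_congr (by congr 1) (fun i _ => by rw [add_comm])
    _ = ∑ k ∈ Finset.range (N+1), g k - g 0 := by rw [Finset.sum_range_succ']; ring
    _ = ∑ k ∈ Finset.range N, g k := by rw [Finset.sum_range_succ, hg0, hgN]; ring
    _ = ∑ k ∈ Finset.range N, saw (((1*k : ℤ):ℚ)/(N:ℚ)) * saw (((x*k : ℤ):ℚ)/(N:ℚ)) :=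
        Finset.sum_congr rfl (fun k _ => hsummand k)

lemma S_neg (x n : ℤ) : S (-x) n = - S x n := by
  unfold S
  rw [← mul_neg, ← Finset.sum_neg_distrib]
  congr 1
  apply Finset.sum_congr rfl; intro k _
  have : ((-x : ℤ):ℚ) * k / n = -((x:ℚ)*k/n) := by push_cast; ring
  rw [this, saw_neg]
  ring

lemma sig_one (u v : ℤ) : sig 1 u v = 0 := by
  unfold sig
  rw [Finset.sum_range_one]
  simp [saw_zero]

lemma triple_sig (a b c : ℕ) (ha : 0 < a) (hb : 0 < b) (hc : 0 < c)
    (hab : IsCoprime (a:ℤ) (b:ℤ)) (hbc : IsCoprime (b:ℤ) (c:ℤ)) (hca : IsCoprime (c:ℤ) (a:ℤ)) :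
    sig a (b:ℤ) (c:ℤ) + sig b (c:ℤ) (a:ℤ) + sig c (a:ℤ) (b:ℤ)
    = -1/4 + ((a:ℚ)^2 + (b:ℚ)^2 + (c:ℚ)^2)/(12*a*b*c) := by
  have key : ∀ m n p : ℕ, sig m (n:ℤ) (p:ℤ)
      = ∑ k ∈ Finset.range m, saw ((n:ℚ)*((k:ℚ)/m)) * saw ((p:ℚ)*((k:ℚ)/m)) := by
    intro m n p
    unfold sig
    apply Finset.sum_congr rfl; intro k _
    congr 2
    · push_cast; ring
    · push_cast; ring
  rw [key a b c, key b c a, key c a b]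
  exact triple_sum a b c ha hb hc hab hbc hca

theorem stmt4_pos (q t a b tstar : ℤ) (hq : 2 ≤ q) (ht : 0 < t) (ha : 0 < a)
    (htq : IsCoprime t q)
    (haq : IsCoprime a q) (hta : t ∣ a ^ 2 + 1) (hb : b * t = q * (a ^ 2 + 1))
    (hts : t * tstar ≡ 1 [ZMOD q]) :
    S a b = ((q ^ 2 - 1 : ℚ) * a) / (t * q) - S (a * q) t + S (a * tstar) q := by
  have hq0 : 0 < q := by omega
  have hc0 : 0 < a^2 + 1 := by positivity
  have hbt : 0 < b * t := by rw [hb]; positivity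
  have hb0 : 0 < b := by nlinarith
  set A := a.toNat with hAdef
  set B := b.toNat with hBdef
  set T := t.toNat with hTdef
  set Q := q.toNat with hQdef
  have hA : (A:ℤ) = a := Int.toNat_of_nonneg ha.le
  have hB : (B:ℤ) = b := Int.toNat_of_nonneg hb0.le
  have hT : (T:ℤ) = t := Int.toNat_of_nonneg ht.le
  have hQ : (Q:ℤ) = q := Int.toNat_of_nonneg hq0.le
  have hApos : 0 < A := by omega
  have hBpos : 0 < B := by omega
  have hTpos : 0 < T := by omega
  have hQpos : 0 < Q := by omega
  have hAQ : ((A:ℕ):ℚ) = ((a:ℤ):ℚ) := by exact_mod_cast congrArg (Int.cast : ℤ → ℚ) hA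
  have hBQ : ((B:ℕ):ℚ) = ((b:ℤ):ℚ) := by exact_mod_cast congrArg (Int.cast : ℤ → ℚ) hB
  have hTQ : ((T:ℕ):ℚ) = ((t:ℤ):ℚ) := by exact_mod_cast congrArg (Int.cast : ℤ → ℚ) hT
  have hQQ : ((Q:ℕ):ℚ) = ((q:ℤ):ℚ) := by exact_mod_cast congrArg (Int.cast : ℤ → ℚ) hQ
  -- coprimality facts
  have cop_ac : IsCoprime a (a^2+1) := by
    have h := (isCoprime_one_right (x := a)).add_mul_left_right a
    have h2 : 1 + a*a = a^2 + 1 := by ring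
    rwa [h2] at h
  have cop_at : IsCoprime a t := cop_ac.of_isCoprime_of_dvd_right hta
  have cop_ab : IsCoprime a b := by
    have h1 : IsCoprime a (q*(a^2+1)) := haq.mul_right cop_ac
    exact h1.of_isCoprime_of_dvd_right ⟨t, hb.symm⟩
  have cop_qts : IsCoprime q tstar := by
    obtain ⟨m, hm⟩ := Int.ModEq.dvd hts
    exact ⟨m, t, by linarith⟩
  -- two-term instance : triple (A, B, 1)
  have c1 : IsCoprime ((A:ℕ):ℤ) ((B:ℕ):ℤ) := by rw [hA, hB]; exact cop_ab
  have c2 : IsCoprime ((B:ℕ):ℤ) ((1:ℕ):ℤ) := by simpa using isCoprime_one_right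
  have c3 : IsCoprime ((1:ℕ):ℤ) ((A:ℕ):ℤ) := by simpa using isCoprime_one_left
  have E1 := triple_sig A B 1 hApos hBpos one_pos c1 c2 c3
  have d1 : IsCoprime ((A:ℕ):ℤ) ((T:ℕ):ℤ) := by rw [hA, hT]; exact cop_at
  have d2 : IsCoprime ((T:ℕ):ℤ) ((Q:ℕ):ℤ) := by rw [hT, hQ]; exact htq
  have d3 : IsCoprime ((Q:ℕ):ℤ) ((A:ℕ):ℤ) := by rw [hQ, hA]; exact haq.symm
  have E2 := triple_sig A T Q hApos hTpos hQpos d1 d2 d3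
  simp only [Nat.cast_one] at E1 E2
  rw [hB, hA] at E1
  rw [hT, hQ, hA] at E2
  rw [hAQ, hBQ] at E1
  rw [hAQ, hTQ, hQQ] at E2
  -- links
  have L2 : sig A b 1 = sig A t q := by
    have u1 : sig A (t*b) (t*1) = sig A b 1 := by
      apply sig_unit A hApos b 1 t
      rw [hA]; exact cop_at
    have u3 : sig A (t*b) (t*1) = sig A (t*b) t := by rw [mul_one]
    have u4 : sig A (t*b) t = sig A q t := by
      apply sig_congr₁ A hApos (t*b) q t
      rw [hA]
      exact ⟨-(q*a), by linear_combination -hb⟩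
    rw [← u1, u3, u4, sig_comm]
  have L3 : sig T q a = - sig T 1 (a*q) := by
    have u1 : sig T (a*q) (a*a) = sig T q a := by
      apply sig_unit T hTpos q a a
      rw [hT]; exact cop_at.symm
    have u2 : sig T (a*q) (a*a) = sig T (a*q) (-1) := by
      apply sig_congr₂ T hTpos (a*q) (a*a) (-1)
      rw [hT]
      have h2 : (-1 : ℤ) - a*a = -(a^2+1) := by ring
      rw [h2]
      exact (dvd_neg).mpr hta
    have u3 : sig T (a*q) (-1) = - sig T (a*q) 1 := sig_neg₂ T (a*q) 1
    rw [← u1, u2, u3, sig_comm]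
  have L4 : sig Q a t = sig Q 1 (a*tstar) := by
    have u1 : sig Q (tstar*a) (tstar*t) = sig Q a t := by
      apply sig_unit Q hQpos a t tstar
      rw [hQ]; exact cop_qts
    have u2 : sig Q (tstar*a) (tstar*t) = sig Q (tstar*a) 1 := by
      apply sig_congr₂ Q hQpos (tstar*a) (tstar*t) 1
      rw [hQ]
      have h2 : (1:ℤ) - tstar*t = 1 - t*tstar := by ring
      rw [h2]
      exact Int.ModEq.dvd hts
    have u3 : sig Q (tstar*a) 1 = sig Q 1 (tstar*a) := sig_comm Q (tstar*a) 1
    have u4 : sig Q 1 (tstar*a) = sig Q 1 (a*tstar) := by rw [mul_comm]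
    rw [← u1, u2, u3, u4]
  -- bridges
  have hSab : S a b = 12 * sig B 1 a := S_eq_sig a b hb0
  have hSaq : S (a*q) t = 12 * sig T 1 (a*q) := S_eq_sig (a*q) t ht
  have hSat : S (a*tstar) q = 12 * sig Q 1 (a*tstar) := S_eq_sig (a*tstar) q hq0
  have hsig1 : sig 1 a b = 0 := sig_one a b
  -- rational identity
  have htQ0 : ((t:ℤ):ℚ) ≠ 0 := by
    have : (0:ℚ) < ((t:ℤ):ℚ) := by exact_mod_cast ht
    linarith
  have hqQ0 : ((q:ℤ):ℚ) ≠ 0 := by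
    have : (0:ℚ) < ((q:ℤ):ℚ) := by exact_mod_cast hq0
    linarith
  have haQ0 : ((a:ℤ):ℚ) ≠ 0 := by
    have : (0:ℚ) < ((a:ℤ):ℚ) := by exact_mod_cast ha
    linarith
  have hbQ0 : ((b:ℤ):ℚ) ≠ 0 := by
    have : (0:ℚ) < ((b:ℤ):ℚ) := by exact_mod_cast hb0
    linarith
  have hbQeq : ((b:ℤ):ℚ) = (q:ℚ)*((a:ℚ)^2+1)/(t:ℚ) := by
    rw [eq_div_iff htQ0]
    exact_mod_cast congrArg (Int.cast : ℤ → ℚ) hb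
  have hkey12 : 12*(((a:ℚ)^2 + (b:ℚ)^2 + 1^2)/(12*(a:ℚ)*(b:ℚ)*1))
      - 12*(((a:ℚ)^2 + (t:ℚ)^2 + (q:ℚ)^2)/(12*(a:ℚ)*(t:ℚ)*(q:ℚ)))
      = ((q:ℚ)^2 - 1)*(a:ℚ)/((t:ℚ)*(q:ℚ)) := by
    rw [hbQeq]
    have h1 : (q:ℚ)*((a:ℚ)^2+1)/(t:ℚ) ≠ 0 := by
      rw [hbQeq] at hbQ0; exact hbQ0
    field_simp
    ring
  linarith [E1, E2, L2, L3, L4, hSab, hSaq, hSat, hsig1, hkey12]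

theorem stmt4 (q t a b tstar : ℤ) (hq : 2 ≤ q) (ht : 0 < t) (htq : IsCoprime t q)
    (haq : IsCoprime a q) (hta : t ∣ a ^ 2 + 1) (hb : b * t = q * (a ^ 2 + 1))
    (hts : t * tstar ≡ 1 [ZMOD q]) :
    S a b = ((q ^ 2 - 1 : ℚ) * a) / (t * q) - S (a * q) t + S (a * tstar) q := by
  rcases lt_trichotomy a 0 with hneg | hzero | hpos
  · have h1 := stmt4_pos q t (-a) b tstar hq ht (by omega) htq haq.neg_left
      (by rwa [show (-a)^2 + 1 = a^2 + 1 by ring]) (by rwa [show (-a)^2+1 = a^2+1 by ring]) hts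
    rw [show (-a)*q = -(a*q) by ring, show (-a)*tstar = -(a*tstar) by ring,
      S_neg a b, S_neg (a*q) t, S_neg (a*tstar) q] at h1
    have h2 : ((-a : ℤ):ℚ) = -((a:ℤ):ℚ) := by push_cast; ring
    rw [h2] at h1
    rw [show ((q:ℚ)^2-1)*(-((a:ℤ):ℚ))/(((t:ℤ):ℚ)*((q:ℤ):ℚ))
      = -(((q:ℚ)^2-1)*((a:ℤ):ℚ)/(((t:ℤ):ℚ)*((q:ℤ):ℚ))) by ring] at h1
    linarith [h1]
  · exfalso
    subst hzero
    have := isCoprime_zero_left.mp haq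
    rw [Int.isUnit_iff] at this
    omega
  · exact stmt4_pos q t a b tstar hq ht hpos htq haq hta hb hts
end

section
/- Fix q ≥ 2. For integers a, t, t* with t > 0, t | a²+1, gcd(aq, t) = 1, and t·t* ≡ 1 (mod q), define λ(a,t,t*) = (q²−1)a/t − (q²−1)a·t* − q·S(aq, t). Then λ(a,t,t*) ≡ 0 (mod q). -/
lemma saw_frac_s7 (x t : ℤ) (ht : 0 < t) (hnd : ¬ t ∣ x) :
    saw ((x:ℚ)/t) = ((x % t : ℤ) : ℚ)/t - 1/2 := by
  have ht0 : (t:ℚ) ≠ 0 := by exact_mod_cast ht.ne'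
  have hden : ¬ ((x:ℚ)/t).den = 1 := by
    intro h
    apply hnd
    have h2 : ((((x:ℚ)/t).num : ℤ) : ℚ) = (x:ℚ)/t := (Rat.den_eq_one_iff _).mp h
    refine ⟨((x:ℚ)/t).num, ?_⟩
    have h3 : (x:ℚ) = (t:ℚ) * (((x:ℚ)/t).num : ℚ) := by
      rw [h2]; field_simp
    exact_mod_cast h3
  rw [saw, if_neg hden]
  have hx : (x:ℚ)/t = ((x / t : ℤ) : ℚ) + ((x % t : ℤ) : ℚ)/t := by
    have h4 : ((t * (x/t) + x % t : ℤ) : ℚ) = (x:ℚ) := by exact_mod_cast congrArg (Int.cast : ℤ → ℚ) (Int.mul_ediv_add_emod x t)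
    field_simp
    push_cast at h4 ⊢
    linarith
  rw [hx, Int.fract_intCast_add, Int.fract_eq_self.mpr ⟨?_, ?_⟩]
  · have h5 : (0:ℤ) ≤ x % t := Int.emod_nonneg x ht.ne'
    positivity
  · rw [div_lt_one (by exact_mod_cast ht)]
    exact_mod_cast Int.emod_lt_of_pos x ht

lemma sum_bij_r (c t : ℤ) (ht : 1 ≤ t) (hc : IsCoprime c t) (g : ℤ → ℤ) :
    ∑ k ∈ Finset.Icc 1 (t.toNat - 1), g ((c * (k:ℤ)) % t)
      = ∑ k ∈ Finset.Icc 1 (t.toNat - 1), g (k : ℤ) := by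
  obtain ⟨u, v, huv⟩ := hc
  have hcast : ((t.toNat : ℤ)) = t := Int.toNat_of_nonneg (by omega)
  have hmem : ∀ k : ℕ, k ∈ Finset.Icc 1 (t.toNat - 1) → 1 ≤ (k:ℤ) ∧ (k:ℤ) ≤ t - 1 := by
    intro k hk
    rw [Finset.mem_Icc] at hk
    constructor
    · exact_mod_cast hk.1
    · have : (k:ℤ) ≤ ((t.toNat - 1 : ℕ) : ℤ) := by exact_mod_cast hk.2
      omega
  -- generic: for coprime w t, the map k ↦ (w*k % t).toNat sends the interval into itself
  have key : ∀ w : ℤ, IsCoprime w t → ∀ k : ℕ, k ∈ Finset.Icc 1 (t.toNat - 1) →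
      ((w * (k:ℤ)) % t).toNat ∈ Finset.Icc 1 (t.toNat - 1) := by
    intro w hw k hk
    obtain ⟨h1, h2⟩ := hmem k hk
    have hnz : (w * (k:ℤ)) % t ≠ 0 := by
      intro h0
      have hdvd : t ∣ w * (k:ℤ) := Int.dvd_of_emod_eq_zero h0
      have : t ∣ (k:ℤ) := (hw.symm).dvd_of_dvd_mul_left hdvd
      have := Int.le_of_dvd (by omega) this
      omega
    have hlt : (w * (k:ℤ)) % t < t := Int.emod_lt_of_pos _ (by omega)
    have hge : 0 ≤ (w * (k:ℤ)) % t := Int.emod_nonneg _ (by omega)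
    rw [Finset.mem_Icc]
    omega
  have hu : IsCoprime u t := ⟨c, v, by linarith [huv]⟩
  have hct : IsCoprime c t := ⟨u, v, by linarith [huv]⟩
  refine Finset.sum_nbij' (fun k => ((c * (k:ℤ)) % t).toNat) (fun k => ((u * (k:ℤ)) % t).toNat)
    (key c hct) (key u hu) ?_ ?_ ?_
  · intro k hk
    obtain ⟨h1, h2⟩ := hmem k hk
    have hge : 0 ≤ (c * (k:ℤ)) % t := Int.emod_nonneg _ (by omega)
    have e1 : (((((c * (k:ℤ)) % t).toNat : ℕ) : ℤ)) = (c * (k:ℤ)) % t := Int.toNat_of_nonneg hge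
    have e2 : (u * ((c * (k:ℤ)) % t)) % t = (k:ℤ) := by
      have : (u * ((c * (k:ℤ)) % t)) % t = (u * (c * (k:ℤ))) % t := by
        rw [Int.mul_emod, Int.emod_emod_of_dvd _ dvd_rfl, ← Int.mul_emod]
      rw [this]
      have : u * (c * (k:ℤ)) = (k:ℤ) + (-(v * (k:ℤ))) * t := by ring_nf; nlinarith [huv]
      rw [this, Int.add_mul_emod_self_right]
      exact Int.emod_eq_of_lt (by omega) (by omega)
    show ((u * ((((c * (k:ℤ)) % t).toNat : ℕ) : ℤ)) % t).toNat = k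
    rw [e1, e2]
    omega
  · intro k hk
    obtain ⟨h1, h2⟩ := hmem k hk
    have hge : 0 ≤ (u * (k:ℤ)) % t := Int.emod_nonneg _ (by omega)
    have e1 : (((((u * (k:ℤ)) % t).toNat : ℕ) : ℤ)) = (u * (k:ℤ)) % t := Int.toNat_of_nonneg hge
    have e2 : (c * ((u * (k:ℤ)) % t)) % t = (k:ℤ) := by
      have : (c * ((u * (k:ℤ)) % t)) % t = (c * (u * (k:ℤ))) % t := by
        rw [Int.mul_emod, Int.emod_emod_of_dvd _ dvd_rfl, ← Int.mul_emod]
      rw [this]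
      have : c * (u * (k:ℤ)) = (k:ℤ) + (-(v * (k:ℤ))) * t := by ring_nf; nlinarith [huv]
      rw [this, Int.add_mul_emod_self_right]
      exact Int.emod_eq_of_lt (by omega) (by omega)
    show ((c * ((((u * (k:ℤ)) % t).toNat : ℕ) : ℤ)) % t).toNat = k
    rw [e1, e2]
    omega
  · intro k hk
    have hge : 0 ≤ (c * (k:ℤ)) % t := Int.emod_nonneg _ (by omega)
    rw [Int.toNat_of_nonneg hge]


lemma sum_id' (m : ℕ) : 2 * ∑ k ∈ Finset.Icc 1 m, (k:ℤ) = m*(m+1) := by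
  induction m with
  | zero => simp
  | succ n ih =>
    rw [Finset.sum_Icc_succ_top (by omega)]
    push_cast
    push_cast at ih
    ring_nf
    ring_nf at ih
    linarith

lemma sum_sq' (m : ℕ) : 6 * ∑ k ∈ Finset.Icc 1 m, (k:ℤ)^2 = m*(m+1)*(2*m+1) := by
  induction m with
  | zero => simp
  | succ n ih =>
    rw [Finset.sum_Icc_succ_top (by omega)]
    push_cast
    push_cast at ih
    ring_nf
    ring_nf at ih
    linarith

lemma key (c t : ℤ) (ht : 1 ≤ t) (hc : IsCoprime c t) :
    ∃ D : ℤ, (t:ℚ) * S c t = D ∧ t ∣ c * D - (c^2 + 1) := by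
  have htz : (t:ℚ) ≠ 0 := by exact_mod_cast (by omega : t ≠ 0)
  have htpos : (0:ℤ) < t := by omega
  have hT1 : 1 ≤ t.toNat := by omega
  have hcast : ((t.toNat:ℕ):ℤ) = t := Int.toNat_of_nonneg (by omega)
  have hcastm : (((t.toNat - 1 :ℕ)):ℤ) = t - 1 := by
    push_cast [Nat.cast_sub hT1]; omega
  set T := t.toNat with hTdef
  set K := Finset.Icc 1 (T - 1) with hKdef
  have hmem : ∀ k ∈ K, 1 ≤ (k:ℤ) ∧ (k:ℤ) ≤ t - 1 := by
    intro k hk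
    rw [hKdef, Finset.mem_Icc] at hk
    have h2 : (k:ℤ) ≤ ((T - 1 : ℕ) : ℤ) := by exact_mod_cast hk.2
    rw [hcastm] at h2
    exact ⟨by exact_mod_cast hk.1, h2⟩
  -- r and f
  set r : ℕ → ℤ := fun k => (c * (k:ℤ)) % t with hrdef
  set f : ℕ → ℤ := fun k => (c * (k:ℤ)) / t with hfdef
  have hrf : ∀ k ∈ K, c * (k:ℤ) = t * f k + r k := by
    intro k _
    rw [hrdef, hfdef]
    exact (Int.mul_ediv_add_emod (c * (k:ℤ)) t).symm
  have hndvd : ∀ k ∈ K, ¬ t ∣ c * (k:ℤ) := by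
    intro k hk hdvd
    obtain ⟨h1, h2⟩ := hmem k hk
    have : t ∣ (k:ℤ) := (hc.symm).dvd_of_dvd_mul_left hdvd
    have := Int.le_of_dvd (by omega) this
    omega
  -- integer sums
  set N : ℤ := ∑ k ∈ K, (k:ℤ) * r k with hNdef
  set F : ℤ := ∑ k ∈ K, (k:ℤ) * f k with hFdef
  set A : ℤ := ∑ k ∈ K, (f k)^2 with hAdef
  set Q1 : ℤ := ∑ k ∈ K, (k:ℤ) with hQ1def
  set Q2 : ℤ := ∑ k ∈ K, (k:ℤ)^2 with hQ2def
  have hQ1r : ∑ k ∈ K, r k = Q1 := by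
    rw [hQ1def, hKdef, hrdef]
    simpa using sum_bij_r c t ht hc (fun x => x)
  have hQ2r : ∑ k ∈ K, (r k)^2 = Q2 := by
    rw [hQ2def, hKdef, hrdef]
    simpa using sum_bij_r c t ht hc (fun x => x^2)
  have hC1 : 2 * Q1 = (t-1) * t := by
    have := sum_id' (T - 1)
    rw [hQ1def, hKdef]
    rw [this]
    rw [hcastm]; ring_nf
  have hC2 : 6 * Q2 = (t-1) * t * (2*t-1) := by
    have := sum_sq' (T - 1)
    rw [hQ2def, hKdef, this, hcastm]; ring_nf
  -- N = c*Q2 - t*F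
  have hN : N = c * Q2 - t * F := by
    have hterm : ∀ k ∈ K, (k:ℤ) * r k = c * (k:ℤ)^2 - t * ((k:ℤ) * f k) := by
      intro k hk
      linear_combination (-(k:ℤ)) * (hrf k hk)
    rw [hNdef, Finset.sum_congr rfl hterm, Finset.sum_sub_distrib,
      ← Finset.mul_sum, ← Finset.mul_sum, hQ2def, hFdef]
  -- 2ctF = (c²-1)Q2 + t²A
  have hA : 2 * c * t * F = (c^2 - 1) * Q2 + t^2 * A := by
    have hterm : ∀ k ∈ K, (r k)^2 = c^2 * (k:ℤ)^2 - 2*c*t*((k:ℤ) * f k) + t^2 * (f k)^2 := by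
      intro k hk
      linear_combination (-(c * (k:ℤ) - t * f k + r k)) * (hrf k hk)
    have h2 : ∑ k ∈ K, (r k)^2 = c^2 * Q2 - 2*c*t*F + t^2*A := by
      rw [Finset.sum_congr rfl hterm, Finset.sum_add_distrib, Finset.sum_sub_distrib,
        ← Finset.mul_sum, ← Finset.mul_sum, ← Finset.mul_sum, hQ2def, hFdef, hAdef]
    linear_combination h2 - hQ2r
  -- split the sum in S
  have hsplit : S c t = 12 * ∑ k ∈ K, saw ((k:ℚ)/t) * saw ((c:ℚ)*k/t) := by
    rw [S]
    have hTT : Finset.Icc 1 t.toNat = Finset.Icc 1 ((T-1)+1) := by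
      rw [show (T-1)+1 = T from by omega]
    rw [hTT, Finset.sum_Icc_succ_top (by omega)]
    have hone : ((((T-1)+1 : ℕ)):ℚ)/(t:ℚ) = 1 := by
      rw [div_eq_one_iff_eq htz]
      exact_mod_cast congrArg (Int.cast : ℤ → ℚ) (by omega : (((T-1)+1:ℕ):ℤ) = t)
    rw [hone, saw_one, zero_mul, add_zero, hKdef]
  have hterm2 : ∀ k ∈ K, saw ((k:ℚ)/t) * saw ((c:ℚ)*k/t)
      = ((k:ℚ)/t - 1/2) * (((r k : ℤ):ℚ)/t - 1/2) := by
    intro k hk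
    obtain ⟨h1, h2⟩ := hmem k hk
    have hk1 : saw ((k:ℚ)/t) = ((k:ℚ))/t - 1/2 := by
      have hnd : ¬ t ∣ (k:ℤ) := by
        intro hd; have := Int.le_of_dvd (by omega) hd; omega
      have hs := saw_frac_s7 (k:ℤ) t htpos hnd
      rw [Int.emod_eq_of_lt (by omega) (by omega)] at hs
      push_cast at hs
      exact hs
    have hk2 : saw ((c:ℚ)*k/t) = ((r k : ℤ):ℚ)/t - 1/2 := by
      have hs := saw_frac_s7 (c*(k:ℤ)) t htpos (hndvd k hk)
      have hcc : ((c*(k:ℤ) : ℤ):ℚ) = (c:ℚ)*(k:ℚ) := by push_cast; ring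
      rw [hcc] at hs
      rw [hs, hrdef]
    rw [hk1, hk2]
  have hmain : (t:ℚ)^2 * S c t = 12*(N:ℚ) - 12*(t:ℚ)*(Q1:ℚ) + 3*(t:ℚ)^2*((t:ℚ)-1) := by
    rw [hsplit, Finset.sum_congr rfl hterm2]
    have expand : ∀ k ∈ K, ((k:ℚ)/t - 1/2) * (((r k : ℤ):ℚ)/t - 1/2)
        = (k:ℚ)*((r k:ℤ):ℚ)/(t:ℚ)^2 - (k:ℚ)/(2*t) - ((r k:ℤ):ℚ)/(2*t) + 1/4 := by
      intro k hk; field_simp; ring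
    rw [Finset.sum_congr rfl expand]
    rw [Finset.sum_add_distrib, Finset.sum_sub_distrib, Finset.sum_sub_distrib, Finset.sum_const]
    have hcard : K.card = T - 1 := by rw [hKdef, Nat.card_Icc]; omega
    have e1 : ∑ k ∈ K, (k:ℚ)*((r k:ℤ):ℚ)/(t:ℚ)^2 = (N:ℚ)/(t:ℚ)^2 := by
      rw [hNdef]; push_cast; rw [Finset.sum_div]
    have e2 : ∑ k ∈ K, (k:ℚ)/(2*(t:ℚ)) = (Q1:ℚ)/(2*(t:ℚ)) := by
      rw [hQ1def]; push_cast; rw [Finset.sum_div]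
    have e3 : ∑ k ∈ K, ((r k:ℤ):ℚ)/(2*(t:ℚ)) = (Q1:ℚ)/(2*(t:ℚ)) := by
      rw [← hQ1r]; push_cast; rw [Finset.sum_div]
    rw [e1, e2, e3, hcard, nsmul_eq_mul]
    rw [show ((T-1:ℕ):ℚ) = (t:ℚ)-1 from by exact_mod_cast congrArg (Int.cast:ℤ→ℚ) hcastm]
    field_simp
    ring
  refine ⟨2*c*(t-1)*(2*t-1) - 12*F - 3*t*(t-1), ?_, ?_⟩
  · have hint : t * (2*c*(t-1)*(2*t-1) - 12*F - 3*t*(t-1)) = 12*N - 12*t*Q1 + 3*t^2*(t-1) := by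
      linear_combination (-12)*hN + 6*t*hC1 + (-2*c)*hC2
    apply mul_left_cancel₀ htz
    calc (t:ℚ) * ((t:ℚ) * S c t) = (t:ℚ)^2 * S c t := by ring
    _ = 12*(N:ℚ) - 12*(t:ℚ)*(Q1:ℚ) + 3*(t:ℚ)^2*((t:ℚ)-1) := hmain
    _ = (t:ℚ) * ((2*c*(t-1)*(2*t-1) - 12*F - 3*t*(t-1) : ℤ) : ℚ) := by
        have h := congrArg (Int.cast : ℤ → ℚ) hint
        push_cast at h ⊢
        linear_combination -h
  · have hID2 : c * (2*c*(t-1)*(2*t-1) - 12*F - 3*t*(t-1))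
        = (c^2+1)*(t-1)*(2*t-1) - 6*t*A - 3*c*t*(t-1) := by
      apply mul_left_cancel₀ (show t ≠ 0 by omega)
      linear_combination (-6)*hA + (-(c^2-1))*hC2
    exact ⟨(c^2+1)*(2*t-3) - 6*A - 3*c*(t-1), by linear_combination hID2⟩

theorem stmt7 (q a t tstar : ℤ) (hq : 2 ≤ q) (ht : 0 < t) (hta : t ∣ a ^ 2 + 1)
    (haqt : IsCoprime (a * q) t) (hts : t * tstar ≡ 1 [ZMOD q]) :
    ∃ n : ℤ, (n : ℚ) = ((q ^ 2 - 1 : ℚ) * a) / t - (q ^ 2 - 1 : ℚ) * a * tstar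
        - (q : ℚ) * S (a * q) t ∧ q ∣ n := by
  have htz : (t:ℚ) ≠ 0 := by exact_mod_cast ht.ne'
  obtain ⟨D, hD, hDmod⟩ := key (a*q) t ht haqt
  obtain ⟨w, hw⟩ := hta
  obtain ⟨z, hz⟩ := hDmod
  have h1 : t ∣ (a*q) * ((q^2-1)*a - q*D) :=
    ⟨-q*w - q*z, by linear_combination (-q)*hw + (-q)*hz⟩
  have h2 : t ∣ ((q^2-1)*a - q*D) := (haqt.symm).dvd_of_dvd_mul_left h1
  obtain ⟨E, hE⟩ := h2
  have hqt : IsCoprime q t := haqt.of_mul_left_right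
  obtain ⟨y, hy⟩ := hts.dvd
  refine ⟨E - (q^2-1)*a*tstar, ?_, ?_⟩
  · have hSval : S (a*q) t = (D:ℚ) / t := by rw [eq_div_iff htz]; linear_combination hD
    have hEc : ((q:ℚ)^2-1)*(a:ℚ) - (q:ℚ)*(D:ℚ) = (t:ℚ)*(E:ℚ) := by exact_mod_cast hE
    rw [hSval]
    push_cast
    field_simp
    linear_combination -hEc
  · have h3 : q ∣ t * (E - (q^2-1)*a*tstar) :=
      ⟨(q^2-1)*a*y - D, by linear_combination (-1)*hE + ((q^2-1)*a)*hy⟩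
    exact hqt.dvd_of_dvd_mul_left h3
end
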